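/- arXiv:1810.00242 — 2 statements merged into one kernel-verified Lean document; each statement's English description precedes it below -/
import Mathlib

section
/- Let M be a finitely spanned ℝ-tree and let C be the set of endpoints of M. Then: (1) if B ⊆ M spans M, then C ⊆ B; and (2) C spans M. Consequently C is the unique smallest set that spans M. -/
open Set Metric

/-- A geodesic segment in a metric space: the image of an isometric embedding of a
closed real interval `[0, ℓ]`, going from `a` to `b`. -/
def IsGeodesicSegmentFromTo {M : Type*} [MetricSpace M] (s : Set M) (a b : M) : Prop :=
  ∃ ℓ : ℝ, 0 ≤ ℓ ∧ ∃ γ : ℝ → M,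
    (∀ u ∈ Set.Icc (0:ℝ) ℓ, ∀ v ∈ Set.Icc (0:ℝ) ℓ, dist (γ u) (γ v) = |u - v|) ∧
    γ 0 = a ∧ γ ℓ = b ∧ s = γ '' Set.Icc 0 ℓ

/-- An arc from `a` to `b`: the (injective, continuous) image of a closed real
interval `[0, ℓ]`; a single point when `a = b`. -/
def IsArcFromTo {M : Type*} [MetricSpace M] (s : Set M) (a b : M) : Prop :=
  ∃ ℓ : ℝ, 0 ≤ ℓ ∧ ∃ γ : ℝ → M,
    ContinuousOn γ (Set.Icc 0 ℓ) ∧ Set.InjOn γ (Set.Icc 0 ℓ) ∧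
    γ 0 = a ∧ γ ℓ = b ∧ s = γ '' Set.Icc 0 ℓ

/-- An ℝ-tree: a metric space in which any two points are joined by a unique arc,
and that arc is a geodesic segment. -/
def IsRTree (M : Type*) [MetricSpace M] : Prop :=
  ∀ a b : M, ∃ s : Set M,
    IsArcFromTo s a b ∧ IsGeodesicSegmentFromTo s a b ∧
    ∀ t : Set M, IsArcFromTo t a b → t = s

/-- The geodesic segment `[a, b]` in an ℝ-tree: the unique arc from `a` to `b`. -/
noncomputable def seg {M : Type*} [MetricSpace M] (h : IsRTree M) (a b : M) : Set M :=
  (h a b).choose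

/-- `B` spans the ℝ-tree `M` if `M` is the union of the segments with endpoints in `B`. -/
def Spans {M : Type*} [MetricSpace M] (h : IsRTree M) (B : Set M) : Prop :=
  ∀ x : M, ∃ b₁ ∈ B, ∃ b₂ ∈ B, x ∈ seg h b₁ b₂

/-- `c` is an endpoint of the ℝ-tree `M`: there do not exist `a, b ∈ M \ {c}`
with `c ∈ [a,b]`. -/
def IsEndpoint {M : Type*} [MetricSpace M] (h : IsRTree M) (c : M) : Prop :=
  ¬ ∃ a b : M, a ≠ c ∧ b ≠ c ∧ c ∈ seg h a b

section RTreeAux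

variable {M : Type*} [MetricSpace M]

lemma seg_unique (h : IsRTree M) {a b : M} {t : Set M} (ht : IsArcFromTo t a b) :
    t = seg h a b :=
  (h a b).choose_spec.2.2 t ht

/-- The segment `seg h a b` is parametrized by a geodesic of length `dist a b`. -/
lemma seg_geo (h : IsRTree M) (a b : M) :
    ∃ γ : ℝ → M,
      (∀ u ∈ Icc (0:ℝ) (dist a b), ∀ v ∈ Icc (0:ℝ) (dist a b), dist (γ u) (γ v) = |u - v|) ∧
      γ 0 = a ∧ γ (dist a b) = b ∧ seg h a b = γ '' Icc 0 (dist a b) := by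
  obtain ⟨ℓ, hℓ, γ, hiso, h0, h1, him⟩ := (h a b).choose_spec.2.1
  have hd : ℓ = dist a b := by
    have := hiso 0 ⟨le_refl _, hℓ⟩ ℓ ⟨hℓ, le_refl _⟩
    rw [h0, h1] at this
    rw [this, zero_sub, abs_neg, abs_of_nonneg hℓ]
  subst hd
  exact ⟨γ, hiso, h0, h1, him⟩

lemma dist_add_of_mem_seg (h : IsRTree M) {a b x : M} (hx : x ∈ seg h a b) :
    dist a x + dist x b = dist a b := by
  obtain ⟨γ, hiso, h0, h1, him⟩ := seg_geo h a b
  rw [him] at hx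
  obtain ⟨u, hu, rfl⟩ := hx
  have e1 : dist a (γ u) = u := by
    rw [← h0, hiso 0 ⟨le_refl _, dist_nonneg⟩ u hu, zero_sub, abs_neg, abs_of_nonneg hu.1]
  have e2 : dist (γ u) b = dist a b - u := by
    have := hiso u hu (dist a b) ⟨dist_nonneg, le_refl _⟩
    rw [h1] at this
    rw [this, abs_of_nonpos (by linarith [hu.2]), neg_sub]
  linarith

lemma dist_pair_seg (h : IsRTree M) {a b p q : M} (hp : p ∈ seg h a b) (hq : q ∈ seg h a b) :
    dist p q = |dist a p - dist a q| := by
  obtain ⟨γ, hiso, h0, h1, him⟩ := seg_geo h a b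
  rw [him] at hp hq
  obtain ⟨u, hu, rfl⟩ := hp
  obtain ⟨v, hv, rfl⟩ := hq
  have e1 : dist a (γ u) = u := by
    rw [← h0, hiso 0 ⟨le_refl _, dist_nonneg⟩ u hu, zero_sub, abs_neg, abs_of_nonneg hu.1]
  have e2 : dist a (γ v) = v := by
    rw [← h0, hiso 0 ⟨le_refl _, dist_nonneg⟩ v hv, zero_sub, abs_neg, abs_of_nonneg hv.1]
  rw [e1, e2, hiso u hu v hv]

/-- Gluing two geodesics end-to-start, with no overlap, produces an arc; hence the
junction point lies on the segment between the extremities. -/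
lemma mem_seg_glue (h : IsRTree M) {p q r : M} {L₁ L₂ : ℝ}
    (hL₁ : 0 ≤ L₁) (hL₂ : 0 ≤ L₂) {f g : ℝ → M}
    (hf : ∀ u ∈ Icc (0:ℝ) L₁, ∀ v ∈ Icc (0:ℝ) L₁, dist (f u) (f v) = |u - v|)
    (hg : ∀ u ∈ Icc (0:ℝ) L₂, ∀ v ∈ Icc (0:ℝ) L₂, dist (g u) (g v) = |u - v|)
    (hf0 : f 0 = p) (hf1 : f L₁ = q) (hg0 : g 0 = q) (hg1 : g L₂ = r)
    (hover : ∀ s ∈ Icc (0:ℝ) L₁, ∀ t ∈ Icc (0:ℝ) L₂, f s = g t → s = L₁ ∧ t = 0) :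
    q ∈ seg h p r := by
  classical
  set δ : ℝ → M := fun u => if u ≤ L₁ then f u else g (u - L₁) with hδdef
  have hδ₁ : ∀ u : ℝ, u ≤ L₁ → δ u = f u := fun u hu => if_pos hu
  have hδ₂ : ∀ u : ℝ, L₁ < u → δ u = g (u - L₁) := fun u hu => if_neg (not_le.mpr hu)
  have hmem₂ : ∀ u : ℝ, L₁ < u → u ≤ L₁ + L₂ → u - L₁ ∈ Icc (0:ℝ) L₂ :=
    fun u h1 h2 => ⟨by linarith, by linarith⟩
  have hdist : ∀ u ∈ Icc (0:ℝ) (L₁+L₂), ∀ v ∈ Icc (0:ℝ) (L₁+L₂), u ≤ v →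
      dist (δ u) (δ v) ≤ v - u := by
    intro u hu v hv huv
    rcases le_or_gt v L₁ with hv1 | hv1
    · rw [hδ₁ u (huv.trans hv1), hδ₁ v hv1,
        hf u ⟨hu.1, huv.trans hv1⟩ v ⟨hv.1, hv1⟩, abs_of_nonpos (by linarith)]
      linarith
    rcases le_or_gt u L₁ with hu1 | hu1
    · rw [hδ₁ u hu1, hδ₂ v hv1]
      have tri : dist (f u) (g (v - L₁)) ≤ dist (f u) q + dist q (g (v - L₁)) :=
        dist_triangle _ _ _
      have e1 : dist (f u) q = L₁ - u := by
        rw [← hf1, hf u ⟨hu.1, hu1⟩ L₁ ⟨hL₁, le_refl _⟩, abs_of_nonpos (by linarith), neg_sub]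
      have e2 : dist q (g (v - L₁)) = v - L₁ := by
        rw [← hg0, hg 0 ⟨le_refl _, hL₂⟩ (v - L₁) (hmem₂ v hv1 hv.2), zero_sub, abs_neg,
          abs_of_nonneg (by linarith)]
      linarith
    · rw [hδ₂ u hu1, hδ₂ v hv1,
        hg (u - L₁) (hmem₂ u hu1 hu.2) (v - L₁) (hmem₂ v hv1 hv.2),
        abs_of_nonpos (by linarith)]
      linarith
  have hcont : ContinuousOn δ (Icc 0 (L₁+L₂)) := by
    have : LipschitzOnWith 1 δ (Icc 0 (L₁+L₂)) := by
      apply LipschitzOnWith.of_dist_le_mul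
      intro u hu v hv
      rw [NNReal.coe_one, one_mul, Real.dist_eq]
      rcases le_total u v with huv | huv
      · calc dist (δ u) (δ v) ≤ v - u := hdist u hu v hv huv
          _ ≤ |u - v| := by rw [abs_sub_comm]; exact le_abs_self _
      · calc dist (δ u) (δ v) = dist (δ v) (δ u) := dist_comm _ _
          _ ≤ u - v := hdist v hv u hu huv
          _ ≤ |u - v| := le_abs_self _
    exact this.continuousOn
  have hinj : InjOn δ (Icc 0 (L₁+L₂)) := by
    intro u hu v hv huv
    rcases le_or_gt u L₁ with hu1 | hu1 <;> rcases le_or_gt v L₁ with hv1 | hv1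
    · rw [hδ₁ u hu1, hδ₁ v hv1] at huv
      have h0 : |u - v| = 0 := by
        rw [← hf u ⟨hu.1, hu1⟩ v ⟨hv.1, hv1⟩, huv, dist_self]
      have := abs_eq_zero.mp h0
      linarith
    · rw [hδ₁ u hu1, hδ₂ v hv1] at huv
      obtain ⟨h1, h2⟩ := hover u ⟨hu.1, hu1⟩ (v - L₁) (hmem₂ v hv1 hv.2) huv
      linarith
    · rw [hδ₂ u hu1, hδ₁ v hv1] at huv
      obtain ⟨h1, h2⟩ := hover v ⟨hv.1, hv1⟩ (u - L₁) (hmem₂ u hu1 hu.2) huv.symm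
      linarith
    · rw [hδ₂ u hu1, hδ₂ v hv1] at huv
      have h0 : |u - L₁ - (v - L₁)| = 0 := by
        rw [← hg (u - L₁) (hmem₂ u hu1 hu.2) (v - L₁) (hmem₂ v hv1 hv.2), huv, dist_self]
      have := abs_eq_zero.mp h0
      linarith
  have hδ0 : δ 0 = p := by rw [hδ₁ 0 hL₁, hf0]
  have hδend : δ (L₁ + L₂) = r := by
    rcases eq_or_lt_of_le hL₂ with hL2eq | hL2pos
    · have hL : L₁ + L₂ = L₁ := by linarith
      rw [hδ₁ _ hL.le, hL, hf1, ← hg1, ← hL2eq, hg0]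
    · rw [hδ₂ _ (by linarith), show L₁ + L₂ - L₁ = L₂ by ring, hg1]
  have harc : IsArcFromTo (δ '' Icc 0 (L₁+L₂)) p r :=
    ⟨L₁ + L₂, by linarith, δ, hcont, hinj, hδ0, hδend, rfl⟩
  have hseg := seg_unique h harc
  rw [← hseg]
  exact ⟨L₁, ⟨hL₁, by linarith⟩, by rw [hδ₁ L₁ (le_refl _), hf1]⟩

lemma mem_seg_of_dist (h : IsRTree M) {a b x : M} (hx : dist a x + dist x b = dist a b) :
    x ∈ seg h a b := by
  obtain ⟨f, hf, hf0, hf1, _⟩ := seg_geo h a x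
  obtain ⟨g, hg, hg0, hg1, _⟩ := seg_geo h x b
  refine mem_seg_glue h dist_nonneg dist_nonneg hf hg hf0 hf1 hg0 hg1 ?_
  intro s hs t ht hst
  have e1 : dist a (f s) = s := by
    rw [← hf0, hf 0 ⟨le_refl _, dist_nonneg⟩ s hs, zero_sub, abs_neg, abs_of_nonneg hs.1]
  have e2 : dist (g t) b = dist x b - t := by
    have := hg t ht (dist x b) ⟨dist_nonneg, le_refl _⟩
    rw [hg1] at this
    rw [this, abs_of_nonpos (by linarith [ht.2]), neg_sub]
  rw [← hst] at e2
  have tri : dist a b ≤ dist a (f s) + dist (f s) b := dist_triangle _ _ _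
  rw [e1, e2] at tri
  constructor <;> linarith [hs.2, ht.1]

lemma left_mem_seg (h : IsRTree M) (a b : M) : a ∈ seg h a b :=
  mem_seg_of_dist h (by simp)

lemma right_mem_seg (h : IsRTree M) (a b : M) : b ∈ seg h a b :=
  mem_seg_of_dist h (by simp)

/-- Median point of a tripod. -/
lemma median (h : IsRTree M) (x u v : M) :
    ∃ m, m ∈ seg h x u ∧ m ∈ seg h x v ∧ m ∈ seg h u v := by
  obtain ⟨γ₁, h1, h10, h11, h1im⟩ := seg_geo h x u
  obtain ⟨γ₂, h2, h20, h21, h2im⟩ := seg_geo h x v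
  set a := dist x u with ha
  set b := dist x v with hb
  set T : Set ℝ := {t | t ∈ Icc 0 (min a b) ∧ γ₁ t = γ₂ t} with hT
  have h0T : (0:ℝ) ∈ T := ⟨⟨le_refl _, le_min dist_nonneg dist_nonneg⟩, by rw [h10, h20]⟩
  have hbdd : BddAbove T := ⟨min a b, fun t ht => ht.1.2⟩
  set τ := sSup T with hτ
  have hτmem : τ ∈ Icc 0 (min a b) :=
    ⟨le_csSup hbdd h0T, csSup_le ⟨0, h0T⟩ fun t ht => ht.1.2⟩
  have hτa : τ ≤ a := hτmem.2.trans (min_le_left _ _)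
  have hτb : τ ≤ b := hτmem.2.trans (min_le_right _ _)
  have hτ0 : 0 ≤ τ := hτmem.1
  have hmm : γ₁ τ = γ₂ τ := by
    have key : ∀ t ∈ T, t ≤ τ - dist (γ₁ τ) (γ₂ τ) / 2 := by
      intro t ht
      have d1 : dist (γ₁ τ) (γ₁ t) = τ - t := by
        rw [h1 τ ⟨hτ0, hτa⟩ t ⟨ht.1.1, ht.1.2.trans (min_le_left _ _)⟩,
          abs_of_nonneg (by linarith [le_csSup hbdd ht])]
      have d2 : dist (γ₂ t) (γ₂ τ) = τ - t := by
        rw [h2 t ⟨ht.1.1, ht.1.2.trans (min_le_right _ _)⟩ τ ⟨hτ0, hτb⟩,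
          abs_of_nonpos (by linarith [le_csSup hbdd ht]), neg_sub]
      have tri : dist (γ₁ τ) (γ₂ τ) ≤ dist (γ₁ τ) (γ₁ t) + dist (γ₂ t) (γ₂ τ) := by
        calc dist (γ₁ τ) (γ₂ τ) ≤ dist (γ₁ τ) (γ₁ t) + dist (γ₁ t) (γ₂ τ) := dist_triangle _ _ _
          _ = dist (γ₁ τ) (γ₁ t) + dist (γ₂ t) (γ₂ τ) := by rw [ht.2]
      linarith
    have : τ ≤ τ - dist (γ₁ τ) (γ₂ τ) / 2 := csSup_le ⟨0, h0T⟩ key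
    have hd0 : dist (γ₁ τ) (γ₂ τ) = 0 := le_antisymm (by linarith) dist_nonneg
    exact dist_eq_zero.mp hd0
  refine ⟨γ₁ τ, ?_, ?_, ?_⟩
  · rw [h1im]; exact ⟨τ, ⟨hτ0, hτa⟩, rfl⟩
  · rw [h2im, hmm]; exact ⟨τ, ⟨hτ0, hτb⟩, rfl⟩
  · -- glue the two branches from u through γ₁ τ to v
    refine mem_seg_glue h (f := fun s => γ₁ (a - s)) (g := fun t => γ₂ (t + τ))
      (L₁ := a - τ) (L₂ := b - τ) (by linarith) (by linarith) ?_ ?_ ?_ ?_ ?_ ?_ ?_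
    · intro s hs t ht
      show dist (γ₁ (a - s)) (γ₁ (a - t)) = |s - t|
      rw [h1 (a - s) ⟨by linarith [hs.2], by linarith [hs.1]⟩
        (a - t) ⟨by linarith [ht.2], by linarith [ht.1]⟩]
      rw [show a - s - (a - t) = t - s by ring, abs_sub_comm]
    · intro s hs t ht
      show dist (γ₂ (s + τ)) (γ₂ (t + τ)) = |s - t|
      rw [h2 (s + τ) ⟨by linarith [hs.1], by linarith [hs.2]⟩
        (t + τ) ⟨by linarith [ht.1], by linarith [ht.2]⟩]
      rw [show s + τ - (t + τ) = s - t by ring]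
    · show γ₁ (a - 0) = u
      rw [show a - 0 = a by ring, h11]
    · show γ₁ (a - (a - τ)) = γ₁ τ
      rw [show a - (a - τ) = τ by ring]
    · show γ₂ (0 + τ) = γ₁ τ
      rw [zero_add, hmm]
    · show γ₂ (b - τ + τ) = v
      rw [show b - τ + τ = b by ring, h21]
    · intro s hs t ht hst
      have hst' : γ₁ (a - s) = γ₂ (t + τ) := hst
      have e1 : dist x (γ₁ (a - s)) = a - s := by
        rw [← h10, h1 0 ⟨le_refl _, dist_nonneg⟩ (a - s) ⟨by linarith [hs.2], by linarith [hs.1]⟩,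
          zero_sub, abs_neg, abs_of_nonneg (by linarith [hs.2])]
      have e2 : dist x (γ₂ (t + τ)) = t + τ := by
        rw [← h20, h2 0 ⟨le_refl _, dist_nonneg⟩ (t + τ) ⟨by linarith [ht.1], by linarith [ht.2]⟩,
          zero_sub, abs_neg, abs_of_nonneg (by linarith [ht.1])]
      have heq : a - s = t + τ := by rw [← e1, ← e2, hst']
      have hmemT : (a - s) ∈ T := by
        refine ⟨⟨by linarith [hs.2], le_min (by linarith [hs.1]) (by linarith [ht.2])⟩, ?_⟩
        rw [heq] at hst' ⊢
        exact hst'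
      have hle : a - s ≤ τ := le_csSup hbdd hmemT
      constructor <;> linarith [hs.2]

/-- On any segment, a point can be pushed to one of the two ends, going away
from any reference point `x`. -/
lemma exists_far (h : IsRTree M) {u v y : M} (x : M) (hy : y ∈ seg h u v) :
    ∃ e, (e = u ∨ e = v) ∧ dist x e = dist x y + dist y e := by
  by_cases hu : y = u
  · exact ⟨u, Or.inl rfl, by rw [hu, dist_self, add_zero]⟩
  by_cases hv : y = v
  · exact ⟨v, Or.inr rfl, by rw [hv, dist_self, add_zero]⟩
  obtain ⟨m, hmu, hmv, hmuv⟩ := median h x u v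
  have d1 : dist x m + dist m u = dist x u := dist_add_of_mem_seg h hmu
  have d2 : dist x m + dist m v = dist x v := dist_add_of_mem_seg h hmv
  have d3 : dist u m + dist m v = dist u v := dist_add_of_mem_seg h hmuv
  have d4 : dist u y + dist y v = dist u v := dist_add_of_mem_seg h hy
  have dpair : dist m y = |dist u m - dist u y| := dist_pair_seg h hmuv hy
  rcases le_total (dist u m) (dist u y) with hc | hc
  · refine ⟨v, Or.inr rfl, ?_⟩
    have hmy : dist m y = dist u y - dist u m := by
      rw [dpair, abs_of_nonpos (by linarith), neg_sub]
    have t1 : dist x v ≤ dist x y + dist y v := dist_triangle _ _ _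
    have t2 : dist x y ≤ dist x m + dist m y := dist_triangle _ _ _
    linarith [dist_comm u m, dist_comm m u]
  · refine ⟨u, Or.inl rfl, ?_⟩
    have hmy : dist m y = dist u m - dist u y := by
      rw [dpair, abs_of_nonneg (by linarith)]
    have t1 : dist x u ≤ dist x y + dist y u := dist_triangle _ _ _
    have t2 : dist x y ≤ dist x m + dist m y := dist_triangle _ _ _
    linarith [dist_comm u m, dist_comm m u, dist_comm y u, dist_comm u y]

/-- If `x ∈ [c₁, c₂]`, `c₂ ≠ x` and `c₂ ∈ [x, e]`, then `x ∈ [c₁, e]`. -/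
lemma seg_chain (h : IsRTree M) {c₁ c₂ x e : M} (h1 : x ∈ seg h c₁ c₂) (hne : c₂ ≠ x)
    (h2 : dist x c₂ + dist c₂ e = dist x e) : x ∈ seg h c₁ e := by
  obtain ⟨m, hm1, hm2, hm3⟩ := median h x c₁ e
  have hc₂ : c₂ ∈ seg h x e := mem_seg_of_dist h h2
  have hp : dist m c₂ = |dist x m - dist x c₂| := dist_pair_seg h hm2 hc₂
  have e1 : dist x m + dist m c₁ = dist x c₁ := dist_add_of_mem_seg h hm1
  have e2 : dist c₁ x + dist x c₂ = dist c₁ c₂ := dist_add_of_mem_seg h h1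
  have tri : dist c₁ c₂ ≤ dist c₁ m + dist m c₂ := dist_triangle _ _ _
  have hpos : 0 < dist x c₂ := dist_pos.mpr fun hh => hne hh.symm
  have hxm : dist x m = 0 := by
    rcases abs_cases (dist x m - dist x c₂) with ⟨he, _⟩ | ⟨he, _⟩ <;>
      · rw [he] at hp
        have := dist_nonneg (x := x) (y := m)
        linarith [dist_comm c₁ x, dist_comm m c₁, dist_comm c₁ m]
  have hm : x = m := dist_eq_zero.mp hxm
  have e3 : dist c₁ m + dist m e = dist c₁ e := dist_add_of_mem_seg h hm3
  rw [← hm] at e3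
  exact mem_seg_of_dist h e3

lemma global_max (h : IsRTree M) {B : Set M} (hfin : B.Finite) (hspan : Spans h B) (x : M) :
    ∃ c ∈ B, ∀ y : M, dist x y ≤ dist x c := by
  have hne : B.Nonempty := by
    obtain ⟨b₁, hb₁, -⟩ := hspan x
    exact ⟨b₁, hb₁⟩
  obtain ⟨c, hc, hmax⟩ := Set.exists_max_image B (dist x) hfin hne
  refine ⟨c, hc, fun y => ?_⟩
  obtain ⟨b₁, hb₁, b₂, hb₂, hy⟩ := hspan y
  obtain ⟨e, he, hde⟩ := exists_far h x hy
  have hxy : dist x y ≤ dist x e := by linarith [dist_nonneg (x := y) (y := e)]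
  rcases he with rfl | rfl
  · exact hxy.trans (hmax e hb₁)
  · exact hxy.trans (hmax e hb₂)

lemma endpoint_of_global_max (h : IsRTree M) {x c : M} (hmax : ∀ y : M, dist x y ≤ dist x c) :
    IsEndpoint h c := by
  intro hcon
  obtain ⟨a, b, ha, hb, hc⟩ := hcon
  obtain ⟨e, he, hde⟩ := exists_far h x hc
  have hce : c ≠ e := by rcases he with rfl | rfl; exacts [fun hh => ha hh.symm, fun hh => hb hh.symm]
  have : 0 < dist c e := dist_pos.mpr hce
  linarith [hmax e]

end RTreeAux

/-- In a finitely spanned ℝ-tree, the set `C` of endpoints is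
contained in every spanning set and itself spans; hence it is the unique smallest
spanning set. -/
theorem statement_1 {M : Type*} [MetricSpace M] (h : IsRTree M)
    (hfin : ∃ B : Set M, B.Finite ∧ Spans h B) :
    (∀ B : Set M, Spans h B → {c : M | IsEndpoint h c} ⊆ B) ∧
      Spans h {c : M | IsEndpoint h c} := by
  obtain ⟨B, hBfin, hBspan⟩ := hfin
  constructor
  · intro B' hB' c hc
    obtain ⟨b₁, hb₁, b₂, hb₂, hmem⟩ := hB' c
    by_cases h1 : b₁ = c
    · exact h1 ▸ hb₁
    by_cases h2 : b₂ = c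
    · exact h2 ▸ hb₂
    exact absurd ⟨b₁, b₂, h1, h2, hmem⟩ hc
  · intro x
    obtain ⟨c₁, hc₁B, hc₁max⟩ := global_max h hBfin hBspan x
    have hc₁end : IsEndpoint h c₁ := endpoint_of_global_max h hc₁max
    set S : Set M := {y ∈ insert x B | x ∈ seg h c₁ y} with hS
    have hSfin : S.Finite := (hBfin.insert x).subset (sep_subset _ _)
    have hxS : x ∈ S := ⟨mem_insert _ _, right_mem_seg h c₁ x⟩
    obtain ⟨c₂, hc₂S, hmax₂⟩ := Set.exists_max_image S (dist x) hSfin ⟨x, hxS⟩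
    have hB1 : ∀ y : M, x ∈ seg h c₁ y → dist x y ≤ dist x c₂ := by
      intro y hy
      rcases eq_or_ne y x with rfl | hyx
      · rw [dist_self]; exact dist_nonneg
      obtain ⟨b₁, hb₁, b₂, hb₂, hyseg⟩ := hBspan y
      obtain ⟨e, he, hde⟩ := exists_far h x hyseg
      have hxe : x ∈ seg h c₁ e := seg_chain h hy hyx hde.symm
      have heB : e ∈ B := by rcases he with rfl | rfl; exacts [hb₁, hb₂]
      have heS : e ∈ S := ⟨mem_insert_of_mem _ heB, hxe⟩
      calc dist x y ≤ dist x e := by linarith [dist_nonneg (x := y) (y := e)]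
        _ ≤ dist x c₂ := hmax₂ e heS
    have hxseg : x ∈ seg h c₁ c₂ := hc₂S.2
    have hc₂end : IsEndpoint h c₂ := by
      intro hcon
      obtain ⟨a, b, ha, hb, hcab⟩ := hcon
      rcases eq_or_ne c₂ x with heq | hcx
      · -- c₂ = x : push x off [a,b] away from c₁
        obtain ⟨e, he, hde⟩ := exists_far h c₁ (heq ▸ hcab)
        have hxe : x ∈ seg h c₁ e := mem_seg_of_dist h hde.symm
        have hex : e ≠ x := by rcases he with rfl | rfl; exacts [heq ▸ ha, heq ▸ hb]
        have hpos : 0 < dist x e := dist_pos.mpr (Ne.symm hex)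
        have hle := hB1 e hxe
        rw [heq, dist_self] at hle
        linarith
      · obtain ⟨e, he, hde⟩ := exists_far h x hcab
        have hex : c₂ ≠ e := by
          rcases he with rfl | rfl; exacts [fun hh => ha hh.symm, fun hh => hb hh.symm]
        have hpos : 0 < dist c₂ e := dist_pos.mpr hex
        have hxe : x ∈ seg h c₁ e := seg_chain h hxseg hcx hde.symm
        have := hB1 e hxe
        linarith
    exact ⟨c₁, hc₁end, c₂, hc₂end, hxseg⟩
end

section
/- Given ℝ-trees M₀, M₁, M₂ and isometric embeddings f₁ : M₀ → M₁ and f₂ : M₀ → M₂, there exist an ℝ-tree N and isometric embeddings g₁ : M₁ → N and g₂ : M₂ → N such that g₁ ∘ f₁ = g₂ ∘ f₂. -/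
open Set Metric

universe u

/-- A distance-preserving map (isometric embedding) between metric spaces. -/
def IsIsometric {A B : Type*} [MetricSpace A] [MetricSpace B] (f : A → B) : Prop :=
  ∀ x y : A, dist (f x) (f y) = dist x y

section RTreeBasics

variable {X : Type*} [MetricSpace X]

/-- geodesic space -/
def Geo (X : Type*) [MetricSpace X] : Prop :=
  ∀ a b : X, ∃ γ : ℝ → X,
    (∀ u ∈ Icc (0:ℝ) (dist a b), ∀ v ∈ Icc (0:ℝ) (dist a b), dist (γ u) (γ v) = |u - v|) ∧
    γ 0 = a ∧ γ (dist a b) = b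

/-- four-point condition (0-hyperbolicity) -/
def FourPt (X : Type*) [MetricSpace X] : Prop :=
  ∀ x y z w : X, dist x y + dist z w ≤ max (dist x z + dist y w) (dist x w + dist y z)

def MBtw (x m y : X) : Prop := dist x m + dist m y = dist x y

noncomputable def gp (m x y : X) : ℝ := (dist x m + dist y m - dist x y) / 2

lemma gp_ineq (h4 : FourPt X) (m x y w : X) : min (gp m x w) (gp m y w) ≤ gp m x y := by
  have h := h4 x y w m
  rcases le_max_iff.mp h with h | h
  · refine le_trans (min_le_left _ _) ?_
    unfold gp
    have e1 : dist y w = dist w y := dist_comm _ _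
    have e2 : dist w m = dist m w := dist_comm _ _
    linarith
  · refine le_trans (min_le_right _ _) ?_
    unfold gp
    have e1 : dist x w = dist w x := dist_comm _ _
    have e2 : dist w m = dist m w := dist_comm _ _
    have e3 : dist y w = dist w y := dist_comm _ _
    linarith

lemma continuousOn_of_lip {γ : ℝ → X} {s : Set ℝ}
    (h : ∀ u ∈ s, ∀ v ∈ s, dist (γ u) (γ v) ≤ |u - v|) : ContinuousOn γ s := by
  intro x hx
  rw [Metric.continuousWithinAt_iff]
  intro ε hε
  exact ⟨ε, hε, fun {y} hy hd => lt_of_le_of_lt (h y hy x hx) (by rwa [Real.dist_eq] at hd)⟩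

lemma btw_mem_arc (h4 : FourPt X) {a b m : X} (hm : MBtw a m b)
    {t : Set X} (ht : IsArcFromTo t a b) : m ∈ t := by
  by_cases hma : m = a
  · obtain ⟨ℓ, hℓ, δ, _, _, h0, _, himg⟩ := ht
    subst hma h0 himg
    exact ⟨0, ⟨le_refl _, hℓ⟩, rfl⟩
  by_cases hmb : m = b
  · obtain ⟨ℓ, hℓ, δ, _, _, _, hL, himg⟩ := ht
    subst hmb hL himg
    exact ⟨ℓ, ⟨hℓ, le_refl _⟩, rfl⟩
  by_contra hmem
  obtain ⟨ℓ, hℓ, δ, hcont, hinj, h0, hL, himg⟩ := ht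
  set U : Set X := {z | 0 < gp m a z} with hU
  set V : Set X := {z | z ≠ m ∧ gp m a z ≤ 0} with hV
  have hUopen : IsOpen U := by
    rw [Metric.isOpen_iff]
    intro z hz
    rw [hU, mem_setOf_eq] at hz
    have hzm : z ≠ m := by
      intro h; rw [h] at hz
      unfold gp at hz; rw [dist_self] at hz
      have : dist a m = dist m a := dist_comm _ _
      linarith
    have hdzm : 0 < dist z m := dist_pos.mpr hzm
    refine ⟨min (gp m a z) (dist z m) / 2, half_pos (lt_min hz hdzm), fun z' hz' => ?_⟩
    rw [Metric.mem_ball] at hz'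
    have hmin1 : min (gp m a z) (dist z m) ≤ dist z m := min_le_right _ _
    have hmin2 : min (gp m a z) (dist z m) ≤ gp m a z := min_le_left _ _
    have h1 : dist z' z < dist z m / 2 := by linarith
    have e0 : dist z z' = dist z' z := dist_comm _ _
    have h2 : dist z m - dist z' z ≤ gp m z' z := by
      unfold gp
      have htr : dist z m ≤ dist z z' + dist z' m := dist_triangle _ _ _
      linarith
    have h3 : 0 < gp m z' z := by linarith
    have hkey := gp_ineq h4 m a z' z
    rw [mem_setOf_eq]
    calc (0:ℝ) < min (gp m a z) (gp m z' z) := lt_min hz h3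
    _ ≤ gp m a z' := hkey
  have hVopen : IsOpen V := by
    rw [Metric.isOpen_iff]
    intro z hz
    rw [hV, mem_setOf_eq] at hz
    obtain ⟨hzm, hgz⟩ := hz
    have hdzm : 0 < dist z m := dist_pos.mpr hzm
    refine ⟨dist z m / 2, by positivity, fun z' hz' => ?_⟩
    rw [Metric.mem_ball] at hz'
    have e0 : dist z z' = dist z' z := dist_comm _ _
    have hz'm : dist z m - dist z' z ≤ dist z' m := by
      have := dist_triangle z z' m; linarith
    rw [mem_setOf_eq]
    constructor
    · intro h
      rw [h] at hz'
      have : dist m z = dist z m := dist_comm _ _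
      linarith
    · by_contra hpos
      push_neg at hpos
      have h2 : 0 < gp m z z' := by unfold gp; linarith
      have hkey := gp_ineq h4 m a z z'
      have : 0 < gp m a z := lt_of_lt_of_le (lt_min hpos h2) hkey
      linarith
  have hconn : IsPreconnected t := by
    rw [himg]
    exact (isPreconnected_Icc).image δ hcont
  have hsub : t ⊆ U ∪ V := by
    intro z hz
    have hzm : z ≠ m := fun h => hmem (h ▸ hz)
    rcases lt_or_ge 0 (gp m a z) with h | h
    · exact Or.inl h
    · exact Or.inr ⟨hzm, h⟩
  have haU : a ∈ t ∩ U := by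
    refine ⟨by rw [himg]; exact ⟨0, ⟨le_refl _, hℓ⟩, h0⟩, ?_⟩
    rw [hU, mem_setOf_eq]; unfold gp
    rw [dist_self]
    have h1 : 0 < dist a m := dist_pos.mpr (fun h => hma (h.symm))
    linarith
  have hbV : b ∈ t ∩ V := by
    refine ⟨by rw [himg]; exact ⟨ℓ, ⟨hℓ, le_refl _⟩, hL⟩, fun h => hmb h.symm, ?_⟩
    unfold gp
    unfold MBtw at hm
    have : dist m b = dist b m := dist_comm _ _
    linarith
  obtain ⟨z, _, hzU, hzV⟩ := hconn U V hUopen hVopen hsub ⟨a, haU⟩ ⟨b, hbV⟩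
  rw [hU, mem_setOf_eq] at hzU
  rw [hV, mem_setOf_eq] at hzV
  linarith [hzV.2]

end RTreeBasics
section CoreL

variable {X : Type*} [MetricSpace X]

lemma arc_eq_geo (h4 : FourPt X) {a b : X} {γ : ℝ → X} {L : ℝ} (hL0 : 0 ≤ L)
    (hiso : ∀ u ∈ Icc (0:ℝ) L, ∀ v ∈ Icc (0:ℝ) L, dist (γ u) (γ v) = |u - v|)
    (hγ0 : γ 0 = a) (hγL : γ L = b)
    {t : Set X} (ht : IsArcFromTo t a b) : t = γ '' Icc 0 L := by
  have hmem0 : (0:ℝ) ∈ Icc (0:ℝ) L := ⟨le_refl _, hL0⟩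
  have hmemL : L ∈ Icc (0:ℝ) L := ⟨hL0, le_refl _⟩
  have hLab : dist a b = L := by
    rw [← hγ0, ← hγL, hiso 0 hmem0 L hmemL]
    rw [abs_of_nonpos (by linarith)]; ring
  -- Step 1 : γ '' Icc 0 L ⊆ t
  have hstep1 : γ '' Icc 0 L ⊆ t := by
    rintro m ⟨u, hu, rfl⟩
    apply btw_mem_arc h4 _ ht
    unfold MBtw
    rw [← hγ0, ← hγL, hiso 0 hmem0 u hu, hiso u hu L hmemL, hiso 0 hmem0 L hmemL]
    rw [abs_of_nonpos (by linarith [hu.1]), abs_of_nonpos (by linarith [hu.2]),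
      abs_of_nonpos (by linarith)]
    ring
  -- Step 2 : t ⊆ γ '' Icc 0 L
  have hγcont : ContinuousOn γ (Icc 0 L) :=
    continuousOn_of_lip (fun u hu v hv => le_of_eq (hiso u hu v hv))
  have hs_conn : IsPreconnected (γ '' Icc 0 L) := (isPreconnected_Icc).image γ hγcont
  obtain ⟨ℓ, hℓ, δ, hcont, hinj, h0, hLδ, himg⟩ := ht
  have hsub' : t ⊆ γ '' Icc 0 L := by
    intro z hz
    by_contra hzs
    obtain ⟨t₀, ht₀, rfl⟩ : ∃ t₀ ∈ Icc (0:ℝ) ℓ, δ t₀ = z := by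
      rw [himg] at hz; obtain ⟨t₀, h1, h2⟩ := hz; exact ⟨t₀, h1, h2⟩
    set A₁ : Set X := δ '' Icc 0 t₀ with hA₁
    set A₂ : Set X := δ '' Icc t₀ ℓ with hA₂
    have hc1 : IsCompact A₁ :=
      isCompact_Icc.image_of_continuousOn (hcont.mono (Icc_subset_Icc (le_refl _) ht₀.2))
    have hc2 : IsCompact A₂ :=
      isCompact_Icc.image_of_continuousOn (hcont.mono (Icc_subset_Icc ht₀.1 (le_refl _)))
    have hcl1 : IsClosed A₁ := hc1.isClosed
    have hcl2 : IsClosed A₂ := hc2.isClosed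
    have hcover : t = A₁ ∪ A₂ := by
      rw [himg, hA₁, hA₂, ← image_union, Icc_union_Icc_eq_Icc ht₀.1 ht₀.2]
    have hsub2 : γ '' Icc 0 L ⊆ A₂ᶜ ∪ A₁ᶜ := by
      intro w hw
      by_contra hww
      rw [mem_union] at hww
      push_neg at hww
      simp only [mem_compl_iff, not_not] at hww
      obtain ⟨hw2, hw1⟩ := hww
      obtain ⟨s₁, hs₁, he₁⟩ := hw1
      obtain ⟨s₂, hs₂, he₂⟩ := hw2
      have hseq : s₁ = s₂ := by
        apply hinj ⟨hs₁.1, le_trans hs₁.2 ht₀.2⟩ ⟨le_trans ht₀.1 hs₂.1, hs₂.2⟩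
        rw [he₁, he₂]
      have : s₁ = t₀ := le_antisymm hs₁.2 (hseq ▸ hs₂.1)
      have hwt : δ t₀ = w := by rw [← he₁, this]
      exact hzs (hwt ▸ hw)
    have haA2 : a ∉ A₂ := by
      rintro ⟨s₂, hs₂, he⟩
      have : s₂ = 0 := hinj ⟨le_trans ht₀.1 hs₂.1, hs₂.2⟩ ⟨le_refl _, hℓ⟩ (by rw [he, h0])
      have ht00 : t₀ = 0 := le_antisymm (this ▸ hs₂.1) ht₀.1
      apply hzs
      rw [ht00, h0]
      exact ⟨0, hmem0, hγ0⟩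
    have hbA1 : b ∉ A₁ := by
      rintro ⟨s₁, hs₁, he⟩
      have : s₁ = ℓ := hinj ⟨hs₁.1, le_trans hs₁.2 ht₀.2⟩ ⟨hℓ, le_refl _⟩ (by rw [he, hLδ])
      have ht0ℓ : t₀ = ℓ := le_antisymm ht₀.2 (this ▸ hs₁.2)
      apply hzs
      rw [ht0ℓ, hLδ]
      exact ⟨L, hmemL, hγL⟩
    have hane : (γ '' Icc 0 L ∩ A₂ᶜ).Nonempty :=
      ⟨a, ⟨0, hmem0, hγ0⟩, haA2⟩
    have hbne : (γ '' Icc 0 L ∩ A₁ᶜ).Nonempty :=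
      ⟨b, ⟨L, hmemL, hγL⟩, hbA1⟩
    obtain ⟨w, hws, hw2, hw1⟩ :=
      hs_conn A₂ᶜ A₁ᶜ hcl2.isOpen_compl hcl1.isOpen_compl hsub2 hane hbne
    have : w ∈ t := hstep1 hws
    rw [hcover] at this
    rcases this with h | h
    · exact hw1 h
    · exact hw2 h
  exact le_antisymm hsub' hstep1

lemma isRTree_of_geo_fourPt (hg : Geo X) (h4 : FourPt X) : IsRTree X := by
  intro a b
  obtain ⟨γ, hiso, h0, hL⟩ := hg a b
  have harc : IsArcFromTo (γ '' Icc 0 (dist a b)) a b := by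
    refine ⟨dist a b, dist_nonneg, γ, ?_, ?_, h0, hL, rfl⟩
    · exact continuousOn_of_lip (fun u hu v hv => le_of_eq (hiso u hu v hv))
    · intro u hu v hv he
      have := hiso u hu v hv
      rw [he, dist_self] at this
      have := abs_eq_zero.mp this.symm
      linarith
  exact ⟨γ '' Icc 0 (dist a b), harc,
    ⟨dist a b, dist_nonneg, γ, hiso, h0, hL, rfl⟩,
    fun t ht => arc_eq_geo h4 dist_nonneg hiso h0 hL ht⟩

lemma geo_of_isRTree (h : IsRTree X) : Geo X := by
  intro a b
  obtain ⟨s, _, ⟨ℓ, hℓ, γ, hiso, h0, hL, _⟩, _⟩ := h a b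
  have hd : dist a b = ℓ := by
    rw [← h0, ← hL, hiso 0 ⟨le_refl _, hℓ⟩ ℓ ⟨hℓ, le_refl _⟩, abs_of_nonpos (by linarith)]
    ring
  rw [hd]
  exact ⟨γ, hiso, h0, hL⟩

end CoreL
section Medians

variable {X : Type*} [MetricSpace X]

/-- a point `m` between `a` and `b` lies on any geodesic parametrization from `a` to `b`. -/
lemma mem_param_of_btw (h4 : FourPt X) {a b m : X} {γ : ℝ → X} {L : ℝ} (hL0 : 0 ≤ L)
    (hiso : ∀ u ∈ Icc (0:ℝ) L, ∀ v ∈ Icc (0:ℝ) L, dist (γ u) (γ v) = |u - v|)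
    (hγ0 : γ 0 = a) (hγL : γ L = b) (hbtw : MBtw a m b) : γ (dist a m) = m := by
  unfold MBtw at hbtw
  have hLab : dist a b = L := by
    rw [← hγ0, ← hγL, hiso 0 ⟨le_refl _, hL0⟩ L ⟨hL0, le_refl _⟩,
      abs_of_nonpos (by linarith)]; ring
  set t := dist a m with htdef
  have htmem : t ∈ Icc (0:ℝ) L := ⟨dist_nonneg, by
    have := dist_nonneg (x := m) (y := b); linarith [hbtw, hLab]⟩
  have h1 : dist a (γ t) = t := by
    rw [← hγ0, hiso 0 ⟨le_refl _, hL0⟩ t htmem, abs_of_nonpos (by linarith [htmem.1])]; ring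
  have h2 : dist b (γ t) = L - t := by
    rw [← hγL, hiso L ⟨hL0, le_refl _⟩ t htmem, abs_of_nonneg (by linarith [htmem.2])]
  have h4' := h4 a b m (γ t)
  have hbm : dist b m = L - t := by
    have : dist m b = dist b m := dist_comm _ _
    linarith [hbtw, hLab]
  rw [hLab, hbm, h1, h2] at h4'
  have : dist m (γ t) ≤ 0 := by
    rcases le_max_iff.mp h4' with h | h <;> linarith
  have : dist m (γ t) = 0 := le_antisymm this dist_nonneg
  rw [← dist_eq_zero.mp this]

lemma med_param (hT : IsRTree X) {x y : X} {γ : ℝ → X} {L : ℝ} (hL0 : 0 ≤ L)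
    (hiso : ∀ u ∈ Icc (0:ℝ) L, ∀ v ∈ Icc (0:ℝ) L, dist (γ u) (γ v) = |u - v|)
    (h0 : γ 0 = x) (hL : γ L = y) (z : X) :
    ∃ t ∈ Icc (0:ℝ) L, MBtw x (γ t) z ∧ MBtw y (γ t) z := by
  obtain ⟨s₂, arc₂, ⟨L2, hL20, γ₂, hiso₂, h20, h2L, hs₂⟩, uniq₂⟩ := hT x z
  obtain ⟨s₃, arc₃, ⟨L3, hL30, γ₃, hiso₃, h30, h3L, hs₃⟩, uniq₃⟩ := hT y z
  have hcontγ : ContinuousOn γ (Icc 0 L) :=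
    continuousOn_of_lip (fun u hu v hv => le_of_eq (hiso u hu v hv))
  have hcont₂ : ContinuousOn γ₂ (Icc 0 L2) :=
    continuousOn_of_lip (fun u hu v hv => le_of_eq (hiso₂ u hu v hv))
  have hs₂cpt : IsCompact s₂ := by
    rw [hs₂]; exact isCompact_Icc.image_of_continuousOn hcont₂
  set S : Set ℝ := Icc 0 L ∩ γ ⁻¹' s₂ with hS
  have hS0 : (0:ℝ) ∈ S := by
    refine ⟨⟨le_refl _, hL0⟩, ?_⟩
    rw [mem_preimage, h0, hs₂]
    exact ⟨0, ⟨le_refl _, hL20⟩, h20⟩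
  have hSne : S.Nonempty := ⟨0, hS0⟩
  have hSbdd : BddAbove S := ⟨L, fun u hu => hu.1.2⟩
  have hSclosed : IsClosed S := by
    exact hcontγ.preimage_isClosed_of_isClosed isClosed_Icc hs₂cpt.isClosed
  have htS : sSup S ∈ S := hSclosed.csSup_mem hSne hSbdd
  set t := sSup S with htdef
  obtain ⟨htIcc, htpre⟩ := htS
  set m := γ t with hmdef
  have hdxm : dist x m = t := by
    rw [hmdef, ← h0, hiso 0 ⟨le_refl _, hL0⟩ t htIcc, abs_of_nonpos (by linarith [htIcc.1])]
    ring
  have hdym : dist y m = L - t := by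
    rw [hmdef, ← hL, hiso L ⟨hL0, le_refl _⟩ t htIcc, abs_of_nonneg (by linarith [htIcc.2])]
  -- m lies on γ₂ at parameter t
  obtain ⟨u, huIcc, hu⟩ : ∃ u ∈ Icc (0:ℝ) L2, γ₂ u = m := by
    have := htpre
    rw [mem_preimage, hs₂] at this
    obtain ⟨u, h1, h2⟩ := this
    exact ⟨u, h1, h2⟩
  have hut : u = t := by
    have : dist x m = u := by
      rw [← hu, ← h20, hiso₂ 0 ⟨le_refl _, hL20⟩ u huIcc, abs_of_nonpos (by linarith [huIcc.1])]
      ring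
    rw [← this, hdxm]
  have htL2 : t ∈ Icc (0:ℝ) L2 := hut ▸ huIcc
  have hdmz : dist m z = L2 - t := by
    rw [← hu, hut, ← h2L, hiso₂ t htL2 L2 ⟨hL20, le_refl _⟩,
      abs_of_nonpos (by linarith [htL2.2])]
    ring
  have hdxz : dist x z = L2 := by
    rw [← h20, ← h2L, hiso₂ 0 ⟨le_refl _, hL20⟩ L2 ⟨hL20, le_refl _⟩,
      abs_of_nonpos (by linarith)]
    ring
  have hbtwx : MBtw x m z := by unfold MBtw; rw [hdxm, hdmz, hdxz]; ring
  -- now the concatenated arc from y to z through m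
  have hu00 : 0 ≤ L - t := by linarith [htIcc.2]
  have hv00 : 0 ≤ L2 - t := by linarith [htL2.2]
  set δ : ℝ → X := fun r => if r < L - t then γ (L - r) else γ₂ (r - (L - t) + t) with hδ
  have hδval1 : ∀ r, r < L - t → δ r = γ (L - r) := fun r hr => if_pos hr
  have hδval2 : ∀ r, ¬(r < L - t) → δ r = γ₂ (r - (L - t) + t) := fun r hr => if_neg hr
  have harg1 : ∀ r ∈ Icc (0:ℝ) ((L - t) + (L2 - t)), r < L - t → L - r ∈ Icc (0:ℝ) L := by
    intro r hr hru; exact ⟨by linarith [hr.1, htIcc.1], by linarith [hr.1]⟩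
  have harg2 : ∀ r ∈ Icc (0:ℝ) ((L - t) + (L2 - t)), ¬(r < L - t) →
      r - (L - t) + t ∈ Icc (0:ℝ) L2 := by
    intro r hr hru
    push_neg at hru
    exact ⟨by linarith [htL2.1], by linarith [hr.2]⟩
  -- distances involving pieces
  have hmm : γ₂ t = m := by rw [← hu, hut]
  have hdist : ∀ r ∈ Icc (0:ℝ) ((L - t) + (L2 - t)), ∀ r' ∈ Icc (0:ℝ) ((L - t) + (L2 - t)), r ≤ r' →
      dist (δ r) (δ r') ≤ r' - r := by
    intro r hr r' hr' hrr
    by_cases h1 : r < (L - t)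
    · by_cases h2 : r' < (L - t)
      · rw [hδval1 r h1, hδval1 r' h2,
          hiso _ (harg1 r hr h1) _ (harg1 r' hr' h2), abs_of_nonneg (by linarith)]
        linarith
      · have h2' : (L - t) ≤ r' := not_lt.mp h2
        have e1 : dist (γ (L - r)) m ≤ dist (γ (L-r)) (γ t) := by rw [hmdef]
        have e2 : dist (γ (L - r)) (γ t) = (L - t) - r := by
          rw [hiso _ (harg1 r hr h1) t htIcc, abs_of_nonneg (by linarith)]
          ring
        have e3 : dist m (γ₂ (r' - (L - t) + t)) = r' - (L - t) := by
          rw [← hmm, hiso₂ t htL2 _ (harg2 r' hr' h2),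
            abs_of_nonpos (by linarith)]
          ring
        calc dist (δ r) (δ r') = dist (γ (L-r)) (γ₂ (r' - (L - t) + t)) := by
              rw [hδval1 r h1, hδval2 r' h2]
        _ ≤ dist (γ (L-r)) m + dist m (γ₂ (r' - (L - t) + t)) := dist_triangle _ _ _
        _ = ((L - t) - r) + (r' - (L - t)) := by rw [← e2, e3, hmdef]
        _ = r' - r := by ring
    · have h2 : ¬ (r' < (L - t)) := fun hc => h1 (lt_of_le_of_lt hrr hc)
      rw [hδval2 r h1, hδval2 r' h2,
        hiso₂ _ (harg2 r hr h1) _ (harg2 r' hr' h2), abs_of_nonpos (by linarith)]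
      linarith
  have hδ0 : δ 0 = y := by
    by_cases h : (0:ℝ) < (L - t)
    · rw [hδval1 0 h]; simpa using hL
    · have hu0z : (L - t) = 0 := le_antisymm (not_lt.mp h) hu00
      rw [hδval2 0 h, hu0z]
      have : (0:ℝ) - 0 + t = t := by ring
      rw [this, hmm, hmdef]
      have : t = L := by linarith
      rw [this, hL]
  have hδend : δ ((L - t) + (L2 - t)) = z := by
    have h : ¬ ((L - t) + (L2 - t) < (L - t)) := by linarith
    rw [hδval2 _ h]
    have : (L - t) + (L2 - t) - (L - t) + t = L2 := by ring
    rw [this, h2L]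
  have harc : IsArcFromTo (δ '' Icc 0 ((L - t) + (L2 - t))) y z := by
    refine ⟨(L - t) + (L2 - t), by linarith, δ, ?_, ?_, hδ0, hδend, rfl⟩
    · apply continuousOn_of_lip
      intro r hr r' hr'
      rcases le_total r r' with h | h
      · calc dist (δ r) (δ r') ≤ r' - r := hdist r hr r' hr' h
        _ ≤ |r - r'| := by rw [abs_sub_comm, abs_of_nonneg (by linarith)]
      · calc dist (δ r) (δ r') = dist (δ r') (δ r) := dist_comm _ _
        _ ≤ r - r' := hdist r' hr' r hr h
        _ ≤ |r - r'| := by rw [abs_of_nonneg (by linarith)]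
    · intro r hr r' hr' he
      by_cases h1 : r < (L - t)
      · by_cases h2 : r' < (L - t)
        · rw [hδval1 r h1, hδval1 r' h2] at he
          have := hiso _ (harg1 r hr h1) _ (harg1 r' hr' h2)
          rw [he, dist_self] at this
          have := abs_eq_zero.mp this.symm
          linarith
        · exfalso
          rw [hδval1 r h1, hδval2 r' h2] at he
          -- the common value lies in s₂, so L - r ∈ S, contradicting sSup
          have hmemS : L - r ∈ S := by
            refine ⟨harg1 r hr h1, ?_⟩
            rw [mem_preimage, he, hs₂]
            exact ⟨r' - (L - t) + t, harg2 r' hr' h2, rfl⟩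
          have : L - r ≤ t := le_csSup hSbdd hmemS
          linarith
      · by_cases h2 : r' < (L - t)
        · exfalso
          rw [hδval2 r h1, hδval1 r' h2] at he
          have hmemS : L - r' ∈ S := by
            refine ⟨harg1 r' hr' h2, ?_⟩
            rw [mem_preimage, ← he, hs₂]
            exact ⟨r - (L - t) + t, harg2 r hr h1, rfl⟩
          have : L - r' ≤ t := le_csSup hSbdd hmemS
          linarith
        · rw [hδval2 r h1, hδval2 r' h2] at he
          have := hiso₂ _ (harg2 r hr h1) _ (harg2 r' hr' h2)
          rw [he, dist_self] at this
          have := abs_eq_zero.mp this.symm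
          linarith
  have himg : δ '' Icc 0 ((L - t) + (L2 - t)) = s₃ := uniq₃ _ harc
  have hmarc : m ∈ s₃ := by
    rw [← himg]
    refine ⟨L - t, ⟨hu00, by linarith⟩, ?_⟩
    rw [hδval2 (L - t) (lt_irrefl _)]
    have e : L - t - (L - t) + t = t := by ring
    rw [e, hmm]
  obtain ⟨w, hwIcc, hw⟩ : ∃ w ∈ Icc (0:ℝ) L3, γ₃ w = m := by
    rw [hs₃] at hmarc; obtain ⟨w, h1, h2⟩ := hmarc; exact ⟨w, h1, h2⟩
  have hdyz : dist y z = L3 := by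
    rw [← h30, ← h3L, hiso₃ 0 ⟨le_refl _, hL30⟩ L3 ⟨hL30, le_refl _⟩,
      abs_of_nonpos (by linarith)]
    ring
  have hdym' : dist y m = w := by
    rw [← hw, ← h30, hiso₃ 0 ⟨le_refl _, hL30⟩ w hwIcc, abs_of_nonpos (by linarith [hwIcc.1])]
    ring
  have hdmz' : dist m z = L3 - w := by
    rw [← hw, ← h3L, hiso₃ w hwIcc L3 ⟨hL30, le_refl _⟩, abs_of_nonpos (by linarith [hwIcc.2])]
    ring
  have hbtwy : MBtw y m z := by unfold MBtw; rw [hdym', hdmz', hdyz]; ring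
  exact ⟨t, htIcc, hbtwx, hbtwy⟩

lemma fourPt_of_isRTree (hT : IsRTree X) : FourPt X := by
  have key : ∀ x y z w : X, ∀ γ : ℝ → X,
      (∀ u ∈ Icc (0:ℝ) (dist x y), ∀ v ∈ Icc (0:ℝ) (dist x y), dist (γ u) (γ v) = |u - v|) →
      γ 0 = x → γ (dist x y) = y →
      ∀ t₁ ∈ Icc (0:ℝ) (dist x y), ∀ t₂ ∈ Icc (0:ℝ) (dist x y),
      MBtw x (γ t₁) z → MBtw y (γ t₁) z → MBtw x (γ t₂) w → MBtw y (γ t₂) w →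
      t₁ ≤ t₂ →
      dist x y + dist z w ≤ dist x w + dist y z := by
    intro x y z w γ hiso h0 hL t₁ ht₁ t₂ ht₂ bx1 by1 bx2 by2 h12
    set L := dist x y
    unfold MBtw at bx1 by1 bx2 by2
    have hd12 : dist (γ t₁) (γ t₂) = t₂ - t₁ := by
      rw [hiso t₁ ht₁ t₂ ht₂, abs_of_nonpos (by linarith)]; ring
    have hxm1 : dist x (γ t₁) = t₁ := by
      rw [← h0, hiso 0 ⟨le_refl _, dist_nonneg⟩ t₁ ht₁, abs_of_nonpos (by linarith [ht₁.1])]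
      ring
    have hxm2 : dist x (γ t₂) = t₂ := by
      rw [← h0, hiso 0 ⟨le_refl _, dist_nonneg⟩ t₂ ht₂, abs_of_nonpos (by linarith [ht₂.1])]
      ring
    have hym1 : dist y (γ t₁) = L - t₁ := by
      rw [← hL, hiso L ⟨dist_nonneg, le_refl _⟩ t₁ ht₁, abs_of_nonneg (by linarith [ht₁.2])]
    have hym2 : dist y (γ t₂) = L - t₂ := by
      rw [← hL, hiso L ⟨dist_nonneg, le_refl _⟩ t₂ ht₂, abs_of_nonneg (by linarith [ht₂.2])]
    have hzw : dist z w ≤ dist z (γ t₁) + (t₂ - t₁) + dist (γ t₂) w := by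
      calc dist z w ≤ dist z (γ t₂) + dist (γ t₂) w := dist_triangle _ _ _
      _ ≤ (dist z (γ t₁) + dist (γ t₁) (γ t₂)) + dist (γ t₂) w := by
          linarith [dist_triangle z (γ t₁) (γ t₂)]
      _ = dist z (γ t₁) + (t₂ - t₁) + dist (γ t₂) w := by rw [hd12]
    have e1 : dist z (γ t₁) = dist (γ t₁) z := dist_comm _ _
    have e2 : dist (γ t₂) w = dist (γ t₂) w := rfl
    linarith [bx2, by1, hzw, hxm2, hym1]
  intro x y z w
  obtain ⟨γ, hiso, h0, hL⟩ := geo_of_isRTree hT x y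
  obtain ⟨t₁, ht₁, bx1, by1⟩ := med_param hT dist_nonneg hiso h0 hL z
  obtain ⟨t₂, ht₂, bx2, by2⟩ := med_param hT dist_nonneg hiso h0 hL w
  rcases le_total t₁ t₂ with h | h
  · exact le_trans (key x y z w γ hiso h0 hL t₁ ht₁ t₂ ht₂ bx1 by1 bx2 by2 h) (le_max_right _ _)
  · have := key x y w z γ hiso h0 hL t₂ ht₂ t₁ ht₁ bx2 by2 bx1 by1 h
    rw [dist_comm w z] at this
    exact le_trans this (le_max_left _ _)

lemma exists_median (hg : Geo X) (h4 : FourPt X) (x y z : X) :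
    ∃ m, MBtw x m y ∧ MBtw x m z ∧ MBtw y m z := by
  have hT := isRTree_of_geo_fourPt hg h4
  obtain ⟨γ, hiso, h0, hL⟩ := hg x y
  obtain ⟨t, ht, bx, by'⟩ := med_param hT dist_nonneg hiso h0 hL z
  refine ⟨γ t, ?_, bx, by'⟩
  unfold MBtw
  have h1 : dist x (γ t) = t := by
    rw [← h0, hiso 0 ⟨le_refl _, dist_nonneg⟩ t ht, abs_of_nonpos (by linarith [ht.1])]; ring
  have h2 : dist (γ t) y = dist x y - t := by
    have hh := hiso t ht (dist x y) ⟨dist_nonneg, le_refl _⟩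
    rw [hL, abs_of_nonpos (by linarith [ht.2])] at hh
    rw [hh]; ring
  rw [h1, h2]; ring

end Medians
section CompletionLemmas

open UniformSpace Filter

variable {M : Type*} [MetricSpace M]

lemma fourPt_completion (h4 : FourPt M) : FourPt (Completion M) := by
  intro p q r s
  refine le_of_forall_pos_le_add ?_
  intro ε hε
  have hd : DenseRange ((↑) : M → Completion M) := Completion.denseRange_coe
  rw [Metric.denseRange_iff] at hd
  obtain ⟨p', hp'⟩ := hd p (ε/8) (by linarith)
  obtain ⟨q', hq'⟩ := hd q (ε/8) (by linarith)
  obtain ⟨r', hr'⟩ := hd r (ε/8) (by linarith)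
  obtain ⟨s', hs'⟩ := hd s (ε/8) (by linarith)
  have bnd : ∀ (x y : Completion M) (x' y' : M), dist x ↑x' < ε/8 → dist y ↑y' < ε/8 →
      |dist x y - dist x' y'| ≤ ε/4 := by
    intro x y x' y' hx hy
    rw [← Completion.dist_eq x' y', ← Real.dist_eq]
    calc dist (dist x y) (dist (↑x' : Completion M) ↑y')
        ≤ dist x ↑x' + dist y ↑y' := dist_dist_dist_le _ _ _ _
      _ ≤ ε/4 := by linarith
  have e1 := bnd p q p' q' hp' hq'
  have e2 := bnd r s r' s' hr' hs'
  have e3 := bnd p r p' r' hp' hr'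
  have e4 := bnd q s q' s' hq' hs'
  have e5 := bnd p s p' s' hp' hs'
  have e6 := bnd q r q' r' hq' hr'
  rw [abs_le] at e1 e2 e3 e4 e5 e6
  rcases le_max_iff.mp (h4 p' q' r' s') with h | h
  · have : dist p q + dist r s ≤ dist p r + dist q s + ε := by linarith [e1.1, e1.2, e2.1, e2.2, e3.1, e3.2, e4.1, e4.2]
    exact le_trans this (add_le_add_left (le_max_left _ _) ε)
  · have : dist p q + dist r s ≤ dist p s + dist q r + ε := by linarith [e1.1, e1.2, e2.1, e2.2, e5.1, e5.2, e6.1, e6.2]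
    exact le_trans this (add_le_add_left (le_max_right _ _) ε)

private lemma abs_min_sub_min_le' (t x y : ℝ) : |min t x - min t y| ≤ |x - y| := by
  rcases le_total t x with h1 | h1 <;> rcases le_total t y with h2 | h2 <;>
    rw [abs_le] <;> constructor <;>
    simp only [min_eq_left, min_eq_right, h1, h2] <;>
    rcases abs_cases (x - y) with ⟨ha, hb⟩ | ⟨ha, hb⟩ <;> linarith

lemma geo_completion (hg : Geo M) (h4 : FourPt M) : Geo (Completion M) := by
  intro a b
  set D := dist a b with hD
  have hD0 : 0 ≤ D := dist_nonneg
  have hd : DenseRange ((↑) : M → Completion M) := Completion.denseRange_coe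
  rw [Metric.denseRange_iff] at hd
  have hsel : ∀ n : ℕ, ∃ pq : M × M,
      dist a ↑pq.1 < 1/(n+1) ∧ dist b ↑pq.2 < 1/(n+1) := by
    intro n
    have hpos : (0:ℝ) < 1/(n+1) := by positivity
    obtain ⟨p, hp⟩ := hd a _ hpos
    obtain ⟨q, hq⟩ := hd b _ hpos
    exact ⟨⟨p, q⟩, hp, hq⟩
  choose P hPa hPb using hsel
  set A : ℕ → M := fun n => (P n).1 with hA
  set B : ℕ → M := fun n => (P n).2 with hB
  set ℓ : ℕ → ℝ := fun n => dist (A n) (B n) with hℓ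
  have hℓ0 : ∀ n, 0 ≤ ℓ n := fun n => dist_nonneg
  choose Γ hΓiso hΓ0 hΓL using fun n => hg (A n) (B n)
  set ε : ℕ → ℝ := fun n => 1/(n+1) with hεdef
  have hε0 : ∀ n, 0 < ε n := by intro n; rw [hεdef]; positivity
  have hAA : ∀ n m, dist (A n) (A m) ≤ ε n + ε m := by
    intro n m
    rw [← Completion.dist_eq]
    calc dist (↑(A n) : Completion M) ↑(A m)
        ≤ dist (↑(A n) : Completion M) a + dist a ↑(A m) := dist_triangle _ _ _
      _ ≤ ε n + ε m := by
          rw [dist_comm (↑(A n) : Completion M) a]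
          exact add_le_add (le_of_lt (hPa n)) (le_of_lt (hPa m))
  have hBB : ∀ n m, dist (B n) (B m) ≤ ε n + ε m := by
    intro n m
    rw [← Completion.dist_eq]
    calc dist (↑(B n) : Completion M) ↑(B m)
        ≤ dist (↑(B n) : Completion M) b + dist b ↑(B m) := dist_triangle _ _ _
      _ ≤ ε n + ε m := by
          rw [dist_comm (↑(B n) : Completion M) b]
          exact add_le_add (le_of_lt (hPb n)) (le_of_lt (hPb m))
  have hℓD : ∀ n, |ℓ n - D| ≤ 2 * ε n := by
    intro n
    have : |dist (↑(A n) : Completion M) ↑(B n) - dist a b| ≤ dist (↑(A n):Completion M) a + dist (↑(B n):Completion M) b := by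
      rw [← Real.dist_eq]
      exact dist_dist_dist_le _ _ _ _
    rw [Completion.dist_eq, dist_comm (↑(A n):Completion M) a, dist_comm (↑(B n):Completion M) b] at this
    calc |ℓ n - D| ≤ dist a ↑(A n) + dist b ↑(B n) := this
    _ ≤ 2 * ε n := by linarith [le_of_lt (hPa n), le_of_lt (hPb n)]
  have hℓℓ : ∀ n m, |ℓ n - ℓ m| ≤ 2 * ε n + 2 * ε m := by
    intro n m
    calc |ℓ n - ℓ m| = |(ℓ n - D) + (D - ℓ m)| := by ring_nf
    _ ≤ |ℓ n - D| + |D - ℓ m| := abs_add_le _ _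
    _ ≤ 2 * ε n + 2 * ε m := by
        rw [abs_sub_comm D (ℓ m)]
        exact add_le_add (hℓD n) (hℓD m)
  -- distance from An to points on the geodesic
  have hdA : ∀ n σ, 0 ≤ σ → σ ≤ ℓ n → dist (A n) (Γ n σ) = σ := by
    intro n σ h0 h1
    rw [← hΓ0 n, hΓiso n 0 ⟨le_refl _, hℓ0 n⟩ σ ⟨h0, h1⟩, abs_of_nonpos (by linarith)]
    ring
  have hdB : ∀ n σ, 0 ≤ σ → σ ≤ ℓ n → dist (B n) (Γ n σ) = ℓ n - σ := by
    intro n σ h0 h1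
    rw [← hΓL n, hΓiso n (ℓ n) ⟨hℓ0 n, le_refl _⟩ σ ⟨h0, h1⟩, abs_of_nonneg (by linarith)]
  have hmid : ∀ n m σ, 0 ≤ σ → σ ≤ ℓ n → σ ≤ ℓ m →
      dist (Γ n σ) (Γ m σ) ≤ dist (A n) (A m) + 2 * dist (B n) (B m) + |ℓ n - ℓ m| := by
    intro n m σ h0 h1 h2
    have k1 := hdA n σ h0 h1
    have k2 := hdB n σ h0 h1
    have k3 := hdA m σ h0 h2
    have k4 := hdB m σ h0 h2
    have t1 : dist (A n) (Γ m σ) ≤ dist (A n) (A m) + σ := by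
      calc dist (A n) (Γ m σ) ≤ dist (A n) (A m) + dist (A m) (Γ m σ) := dist_triangle _ _ _
      _ = dist (A n) (A m) + σ := by rw [k3]
    have t2 : dist (B n) (Γ m σ) ≤ dist (B n) (B m) + (ℓ m - σ) := by
      calc dist (B n) (Γ m σ) ≤ dist (B n) (B m) + dist (B m) (Γ m σ) := dist_triangle _ _ _
      _ = dist (B n) (B m) + (ℓ m - σ) := by rw [k4]
    have habs : ℓ m - ℓ n ≤ |ℓ n - ℓ m| := by
      rw [abs_sub_comm]; exact le_abs_self _
    rcases le_max_iff.mp (h4 (A n) (B n) (Γ n σ) (Γ m σ)) with h | h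
    · -- dist (A n) (B n) + dist (Γ n σ) (Γ m σ) ≤ dist (A n) (Γ n σ) + dist (B n) (Γ m σ)
      rw [k1] at h
      have : dist (Γ n σ) (Γ m σ) ≤ dist (B n) (B m) + (ℓ m - ℓ n) := by linarith
      linarith [dist_nonneg (x := A n) (y := A m), dist_nonneg (x := B n) (y := B m)]
    · rw [k2] at h
      have : dist (Γ n σ) (Γ m σ) ≤ dist (A n) (A m) := by linarith
      linarith [dist_nonneg (x := B n) (y := B m), abs_nonneg (ℓ n - ℓ m)]
  set c : ℕ → ℝ → Completion M := fun n t => ↑(Γ n (min t (ℓ n))) with hc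
  have hcc : ∀ t, 0 ≤ t → ∀ n m, dist (c n t) (c m t) ≤ 9 * (ε n + ε m) := by
    intro t ht n m
    set s₁ := min t (ℓ n) with hs₁
    set s₂ := min t (ℓ m) with hs₂
    set σ := min s₁ s₂ with hσ
    have h0σ : 0 ≤ σ := le_min (le_min ht (hℓ0 n)) (le_min ht (hℓ0 m))
    have hσ1 : σ ≤ s₁ := min_le_left _ _
    have hσ2 : σ ≤ s₂ := min_le_right _ _
    have hσn : σ ≤ ℓ n := le_trans hσ1 (min_le_right _ _)
    have hσm : σ ≤ ℓ m := le_trans hσ2 (min_le_right _ _)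
    have hs₁n : s₁ ≤ ℓ n := min_le_right _ _
    have hs₂m : s₂ ≤ ℓ m := min_le_right _ _
    have h0s₁ : 0 ≤ s₁ := le_min ht (hℓ0 n)
    have h0s₂ : 0 ≤ s₂ := le_min ht (hℓ0 m)
    have hs12 : |s₁ - s₂| ≤ |ℓ n - ℓ m| := abs_min_sub_min_le' t (ℓ n) (ℓ m)
    have d1 : dist (Γ n s₁) (Γ n σ) = s₁ - σ := by
      rw [hΓiso n s₁ ⟨h0s₁, hs₁n⟩ σ ⟨h0σ, hσn⟩, abs_of_nonneg (by linarith)]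
    have d2 : dist (Γ m σ) (Γ m s₂) = s₂ - σ := by
      rw [hΓiso m σ ⟨h0σ, hσm⟩ s₂ ⟨h0s₂, hs₂m⟩, abs_of_nonpos (by linarith)]
      ring
    have dd1 : s₁ - σ ≤ |ℓ n - ℓ m| := by
      rcases min_cases s₁ s₂ with ⟨he, _⟩ | ⟨he, hle⟩
      · rw [hσ, he]; simp
      · rw [hσ, he]
        calc s₁ - s₂ ≤ |s₁ - s₂| := le_abs_self _
        _ ≤ |ℓ n - ℓ m| := hs12
    have dd2 : s₂ - σ ≤ |ℓ n - ℓ m| := by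
      rcases min_cases s₁ s₂ with ⟨he, hle⟩ | ⟨he, _⟩
      · rw [hσ, he]
        calc s₂ - s₁ ≤ |s₂ - s₁| := le_abs_self _
        _ = |s₁ - s₂| := abs_sub_comm _ _
        _ ≤ |ℓ n - ℓ m| := hs12
      · rw [hσ, he]; simp
    have hmain : dist (c n t) (c m t) ≤ (s₁ - σ) + (dist (A n) (A m) + 2 * dist (B n) (B m) + |ℓ n - ℓ m|) + (s₂ - σ) := by
      rw [hc]
      simp only []
      rw [Completion.dist_eq]
      calc dist (Γ n s₁) (Γ m s₂)
          ≤ dist (Γ n s₁) (Γ n σ) + dist (Γ n σ) (Γ m σ) + dist (Γ m σ) (Γ m s₂) :=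
            dist_triangle4 _ _ _ _
        _ ≤ (s₁ - σ) + (dist (A n) (A m) + 2 * dist (B n) (B m) + |ℓ n - ℓ m|) + (s₂ - σ) := by
            rw [d1, d2]
            exact add_le_add (add_le_add_right (hmid n m σ h0σ hσn hσm) _) (le_refl _)
    calc dist (c n t) (c m t)
        ≤ (s₁ - σ) + (dist (A n) (A m) + 2 * dist (B n) (B m) + |ℓ n - ℓ m|) + (s₂ - σ) := hmain
      _ ≤ 9 * (ε n + ε m) := by
          have := hAA n m
          have := hBB n m
          have := hℓℓ n m
          linarith [dd1, dd2]
  have hcauchy : ∀ t, 0 ≤ t → CauchySeq (fun n => c n t) := by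
    intro t ht
    rw [Metric.cauchySeq_iff]
    intro δ hδ
    obtain ⟨N, hN⟩ := exists_nat_one_div_lt (show (0:ℝ) < δ/40 by linarith)
    refine ⟨N, fun n hn m hm => ?_⟩
    have h1 : ε n ≤ 1/(N+1) := by
      rw [hεdef]
      apply one_div_le_one_div_of_le (by positivity)
      exact_mod_cast by exact_mod_cast add_le_add_left (Nat.cast_le.mpr hn) 1
    have h2 : ε m ≤ 1/(N+1) := by
      rw [hεdef]
      apply one_div_le_one_div_of_le (by positivity)
      exact_mod_cast by exact_mod_cast add_le_add_left (Nat.cast_le.mpr hm) 1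
    calc dist (c n t) (c m t) ≤ 9 * (ε n + ε m) := hcc t ht n m
    _ ≤ 9 * (1/(N+1) + 1/(N+1)) := by linarith
    _ = 18 * (1/(N+1)) := by ring
    _ < 18 * (δ/40) := by linarith
    _ ≤ δ := by linarith
  have hlim : ∀ t, 0 ≤ t → ∃ x : Completion M, Tendsto (fun n => c n t) atTop (nhds x) :=
    fun t ht => cauchySeq_tendsto_of_complete (hcauchy t ht)
  set γ' : ℝ → Completion M := fun t => if ht : 0 ≤ t then (hlim t ht).choose else a with hγ'
  have htend : ∀ t, 0 ≤ t → Tendsto (fun n => c n t) atTop (nhds (γ' t)) := by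
    intro t ht
    rw [hγ']
    simp only [dif_pos ht]
    exact (hlim t ht).choose_spec
  have hεlim : Tendsto ε atTop (nhds 0) := tendsto_one_div_add_atTop_nhds_zero_nat
  have hAlim : Tendsto (fun n => (↑(A n) : Completion M)) atTop (nhds a) := by
    rw [tendsto_iff_dist_tendsto_zero]
    apply squeeze_zero (fun n => dist_nonneg) (g := ε)
    · intro n
      rw [dist_comm]
      exact le_of_lt (hPa n)
    · exact hεlim
  have hBlim : Tendsto (fun n => (↑(B n) : Completion M)) atTop (nhds b) := by
    rw [tendsto_iff_dist_tendsto_zero]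
    apply squeeze_zero (fun n => dist_nonneg) (g := ε)
    · intro n
      rw [dist_comm]
      exact le_of_lt (hPb n)
    · exact hεlim
  have hℓlim : Tendsto ℓ atTop (nhds D) := by
    have h := hAlim.dist hBlim
    rw [← hD] at h
    have he : (fun n => dist (↑(A n) : Completion M) ↑(B n)) = ℓ := by
      funext n
      rw [Completion.dist_eq]
    rwa [he] at h
  refine ⟨γ', ?_, ?_, ?_⟩
  · intro u hu v hv
    have h1 := (htend u hu.1).dist (htend v hv.1)
    have h2 : ∀ n, dist (c n u) (c n v) = |min u (ℓ n) - min v (ℓ n)| := by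
      intro n
      rw [hc]
      simp only []
      rw [Completion.dist_eq]
      exact hΓiso n _ ⟨le_min hu.1 (hℓ0 n), min_le_right _ _⟩
        _ ⟨le_min hv.1 (hℓ0 n), min_le_right _ _⟩
    have h3 : Tendsto (fun n => |min u (ℓ n) - min v (ℓ n)|) atTop (nhds |min u D - min v D|) :=
      (((tendsto_const_nhds.min hℓlim)).sub ((tendsto_const_nhds.min hℓlim))).abs
    rw [min_eq_left hu.2, min_eq_left hv.2] at h3
    have h1' : Tendsto (fun n => |min u (ℓ n) - min v (ℓ n)|) atTop
        (nhds (dist (γ' u) (γ' v))) := by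
      apply h1.congr
      intro n
      exact h2 n
    exact tendsto_nhds_unique h1' h3
  · have h0 : (fun n => c n 0) = fun n => (↑(A n) : Completion M) := by
      funext n
      rw [hc]
      simp only []
      rw [min_eq_left (hℓ0 n), hΓ0 n]
    have := htend 0 (le_refl 0)
    rw [h0] at this
    exact tendsto_nhds_unique this hAlim
  · have key : Tendsto (fun n => c n D) atTop (nhds b) := by
      rw [tendsto_iff_dist_tendsto_zero]
      apply squeeze_zero (f := fun n => dist (c n D) b) (g := fun n => 3 * ε n)
        (fun n => dist_nonneg)
      · intro n
        have e1 : dist (c n D) (↑(B n) : Completion M) = |min D (ℓ n) - ℓ n| := by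
          rw [hc]
          simp only []
          rw [Completion.dist_eq, ← hΓL n]
          exact hΓiso n _ ⟨le_min hD0 (hℓ0 n), min_le_right _ _⟩ _ ⟨hℓ0 n, le_refl _⟩
        have e2 : |min D (ℓ n) - ℓ n| ≤ |D - ℓ n| := by
          rcases min_cases D (ℓ n) with ⟨he, hle⟩ | ⟨he, hle⟩
          · rw [he]
          · rw [he]
            simp
        have e3 : |D - ℓ n| ≤ 2 * ε n := by
          rw [abs_sub_comm]
          exact hℓD n
        calc dist (c n D) b ≤ dist (c n D) ↑(B n) + dist (↑(B n) : Completion M) b :=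
              dist_triangle _ _ _
          _ ≤ |D - ℓ n| + dist b ↑(B n) := by
              rw [e1, dist_comm (↑(B n) : Completion M) b]
              exact add_le_add e2 (le_refl _)
          _ ≤ 2 * ε n + ε n := add_le_add e3 (le_of_lt (hPb n))
          _ = 3 * ε n := by ring
      · have : Tendsto (fun n => 3 * ε n) atTop (nhds (3 * 0)) := hεlim.const_mul 3
        simpa using this
    exact tendsto_nhds_unique (htend D hD0) key
end CompletionLemmas
section Projection

open Filter

variable {Y : Type*} [MetricSpace Y]

lemma exists_proj_point [CompleteSpace Y] (hg : Geo Y) (h4 : FourPt Y) {B : Set Y}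
    (hne : B.Nonempty) (hcl : IsClosed B)
    (hconv : ∀ p ∈ B, ∀ q ∈ B, ∀ m, MBtw p m q → m ∈ B) (z : Y) :
    ∃ q ∈ B, ∀ p ∈ B, dist z p = dist z q + dist q p := by
  set ρ := Metric.infDist z B with hρ
  have hsel : ∀ n : ℕ, ∃ q ∈ B, dist z q < ρ + 1/(n+1) := by
    intro n
    apply (Metric.infDist_lt_iff hne).mp
    have : (0:ℝ) < 1/(n+1) := by positivity
    linarith
  choose q hqB hqd using hsel
  have hρle : ∀ p ∈ B, ρ ≤ dist z p := fun p hp => Metric.infDist_le_dist_of_mem hp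
  have hqq : ∀ n m, dist (q n) (q m) ≤ 1/(n+1) + 1/(m+1) := by
    intro n m
    obtain ⟨c, b1, b2, b3⟩ := exists_median hg h4 z (q n) (q m)
    have hcB : c ∈ B := hconv _ (hqB n) _ (hqB m) c b3
    have hρc : ρ ≤ dist z c := hρle c hcB
    unfold MBtw at b1 b2 b3
    have e1 : dist c (q n) = dist (q n) c := dist_comm _ _
    linarith [hqd n, hqd m]
  have hcauchy : CauchySeq q := by
    rw [Metric.cauchySeq_iff]
    intro δ hδ
    obtain ⟨N, hN⟩ := exists_nat_one_div_lt (show (0:ℝ) < δ/3 by linarith)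
    refine ⟨N, fun n hn m hm => ?_⟩
    have h1 : 1/((n:ℝ)+1) ≤ 1/(N+1) := by
      apply one_div_le_one_div_of_le (by positivity)
      exact_mod_cast add_le_add_left (Nat.cast_le.mpr hn) 1
    have h2 : 1/((m:ℝ)+1) ≤ 1/(N+1) := by
      apply one_div_le_one_div_of_le (by positivity)
      exact_mod_cast add_le_add_left (Nat.cast_le.mpr hm) 1
    calc dist (q n) (q m) ≤ 1/(n+1) + 1/(m+1) := hqq n m
    _ ≤ 1/(N+1) + 1/(N+1) := add_le_add h1 h2
    _ < δ/3 + δ/3 := by linarith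
    _ ≤ δ := by linarith
  obtain ⟨q', hq'⟩ := cauchySeq_tendsto_of_complete hcauchy
  have hq'B : q' ∈ B := hcl.mem_of_tendsto hq' (Filter.Eventually.of_forall hqB)
  have hzq' : dist z q' = ρ := by
    have h1 : Tendsto (fun n => dist z (q n)) atTop (nhds (dist z q')) :=
      tendsto_const_nhds.dist hq'
    have h2 : Tendsto (fun n => dist z (q n)) atTop (nhds ρ) := by
      refine tendsto_of_tendsto_of_tendsto_of_le_of_le tendsto_const_nhds
        ?_ (fun n => hρle _ (hqB n)) (fun n => le_of_lt (hqd n))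
      simpa using tendsto_one_div_add_atTop_nhds_zero_nat.const_add ρ
    exact tendsto_nhds_unique h1 h2
  refine ⟨q', hq'B, fun p hp => ?_⟩
  obtain ⟨c, b1, b2, b3⟩ := exists_median hg h4 z q' p
  have hcB : c ∈ B := hconv _ hq'B _ hp c b3
  have hρc : ρ ≤ dist z c := hρle c hcB
  unfold MBtw at b1 b2 b3
  have hcq' : dist c q' = 0 := by linarith [dist_nonneg (x := c) (y := q')]
  have hceq : c = q' := dist_eq_zero.mp hcq'
  rw [← hceq]
  have e : dist z c = dist z q' := by rw [hceq]
  linarith [b2]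

lemma proj_fixed {B : Set Y} {π : Y → Y}
    (hπ : ∀ z, ∀ p ∈ B, dist z p = dist z (π z) + dist (π z) p) :
    ∀ p ∈ B, π p = p := by
  intro p hp
  have := hπ p p hp
  rw [dist_self] at this
  have h1 : dist p (π p) = 0 := by
    have := dist_comm (π p) p
    linarith [dist_nonneg (x := p) (y := π p)]
  exact (dist_eq_zero.mp h1).symm

lemma proj_unique {B : Set Y} {π : Y → Y} (hπB : ∀ z, π z ∈ B)
    (hπ : ∀ z, ∀ p ∈ B, dist z p = dist z (π z) + dist (π z) p)
    {z : Y} {c : Y} (hc : c ∈ B) (hid : ∀ p ∈ B, dist z p = dist z c + dist c p) :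
    π z = c := by
  have h1 := hπ z c hc
  have h2 := hid (π z) (hπB z)
  have e : dist c (π z) = dist (π z) c := dist_comm _ _
  have : dist (π z) c = 0 := by linarith [dist_nonneg (x := π z) (y := c)]
  exact dist_eq_zero.mp this

lemma proj_dichotomy (hg : Geo Y) (h4 : FourPt Y) {B : Set Y}
    (hconv : ∀ p ∈ B, ∀ q ∈ B, ∀ m, MBtw p m q → m ∈ B)
    {π : Y → Y} (hπB : ∀ z, π z ∈ B)
    (hπ : ∀ z, ∀ p ∈ B, dist z p = dist z (π z) + dist (π z) p) (z w : Y) :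
    π z = π w ∨ dist z w = dist z (π z) + dist (π z) (π w) + dist (π w) w := by
  obtain ⟨m, b1, b2, b3⟩ := exists_median hg h4 z w (π w)
  have hbtwproj : MBtw z (π z) (π w) := (hπ z (π w) (hπB w)).symm
  obtain ⟨γ, hiso, h0, hL⟩ := hg z (π w)
  set L := dist z (π w) with hLdef
  have hL0 : 0 ≤ L := dist_nonneg
  have hm : γ (dist z m) = m := mem_param_of_btw h4 hL0 hiso h0 hL b2
  have hπzγ : γ (dist z (π z)) = π z := mem_param_of_btw h4 hL0 hiso h0 hL hbtwproj
  have hmIcc : dist z m ∈ Icc (0:ℝ) L := by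
    refine ⟨dist_nonneg, ?_⟩
    unfold MBtw at b2
    linarith [dist_nonneg (x := m) (y := π w)]
  have hπzIcc : dist z (π z) ∈ Icc (0:ℝ) L := by
    refine ⟨dist_nonneg, ?_⟩
    unfold MBtw at hbtwproj
    linarith [dist_nonneg (x := π z) (y := π w)]
  have hLIcc : L ∈ Icc (0:ℝ) L := ⟨hL0, le_refl _⟩
  unfold MBtw at b1 b2 b3 hbtwproj
  have hdγγ : ∀ s ∈ Icc (0:ℝ) L, ∀ t ∈ Icc (0:ℝ) L, dist (γ s) (γ t) = |s - t| := hiso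
  rcases le_total (dist z m) (dist z (π z)) with hle | hle
  · -- π z = π w
    left
    have e1 : dist m (π z) = dist z (π z) - dist z m := by
      have hh := hdγγ _ hmIcc _ hπzIcc
      rw [hm, hπzγ] at hh
      rw [hh, abs_of_nonpos (by linarith)]
      ring
    have eP : dist m (π w) = L - dist z m := by
      have hh := hdγγ _ hmIcc _ hLIcc
      rw [hm, hL] at hh
      rw [hh, abs_of_nonpos (by linarith [hmIcc.2])]
      ring
    have htri : dist w (π z) ≤ dist w m + dist m (π z) := dist_triangle _ _ _
    have hwπz : dist w (π z) = dist w (π w) + dist (π w) (π z) := hπ w (π z) (hπB z)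
    have hwm : dist w m = dist m w := dist_comm _ _
    have e2 : dist (π w) (π z) = dist (π z) (π w) := dist_comm _ _
    have : dist (π z) (π w) ≤ 0 := by linarith
    have := le_antisymm this dist_nonneg
    exact dist_eq_zero.mp this
  · -- the formula
    right
    have hb : MBtw (π z) m (π w) := by
      unfold MBtw
      have e1 : dist (π z) m = dist z m - dist z (π z) := by
        have hh := hdγγ _ hπzIcc _ hmIcc
        rw [hm, hπzγ] at hh
        rw [hh, abs_of_nonpos (by linarith)]
        ring
      have e2 : dist m (π w) = L - dist z m := by
        have hh := hdγγ _ hmIcc _ hLIcc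
        rw [hm, hL] at hh
        rw [hh, abs_of_nonpos (by linarith [hmIcc.2])]
        ring
      have e3 : dist (π z) (π w) = L - dist z (π z) := by
        have hh := hdγγ _ hπzIcc _ hLIcc
        rw [hπzγ, hL] at hh
        rw [hh, abs_of_nonpos (by linarith [hπzIcc.2])]
        ring
      rw [e1, e2, e3]
      ring
    have hmB : m ∈ B := hconv _ (hπB z) _ (hπB w) m hb
    have hid : dist w m = dist w (π w) + dist (π w) m := hπ w m hmB
    have e4 : dist (π w) m = dist m (π w) := dist_comm _ _
    have e5 : dist w m = dist m w := dist_comm _ _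
    have hmπw : dist m (π w) = 0 := by linarith [dist_nonneg (x := m) (y := π w)]
    have hmeq : m = π w := dist_eq_zero.mp hmπw
    rw [hmeq] at b1
    have e6 : dist (π w) w = dist w (π w) := dist_comm _ _
    linarith

lemma range_convex {Z : Type*} [MetricSpace Z] (hgZ : Geo Z) (h4Y : FourPt Y) {G : Z → Y}
    (hG : ∀ u v, dist (G u) (G v) = dist u v) :
    ∀ p ∈ range G, ∀ q ∈ range G, ∀ m, MBtw p m q → m ∈ range G := by
  rintro _ ⟨u, rfl⟩ _ ⟨v, rfl⟩ m hm
  obtain ⟨γ, hiso, h0, hL⟩ := hgZ u v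
  have hd : dist (G u) (G v) = dist u v := hG u v
  have hiso' : ∀ s ∈ Icc (0:ℝ) (dist (G u) (G v)), ∀ t ∈ Icc (0:ℝ) (dist (G u) (G v)),
      dist (G (γ s)) (G (γ t)) = |s - t| := by
    rw [hd]
    intro s hs t ht
    rw [hG]
    exact hiso s hs t ht
  have h0' : G (γ 0) = G u := by rw [h0]
  have hL' : G (γ (dist (G u) (G v))) = G v := by rw [hd, hL]
  have := mem_param_of_btw h4Y dist_nonneg hiso' h0' hL' hm
  exact ⟨γ (dist (G u) m), this⟩

lemma range_closed {Z : Type*} [MetricSpace Z] [CompleteSpace Z] {G : Z → Y}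
    (hG : ∀ u v, dist (G u) (G v) = dist u v) : IsClosed (range G) :=
  ((Isometry.of_dist_eq hG).isClosedEmbedding).isClosed_range

end Projection
section AmalgamHelpers

variable {P : Type*} [MetricSpace P]

lemma q_swap1 {x y z w : P}
    (h : dist x y + dist z w ≤ max (dist x z + dist y w) (dist x w + dist y z)) :
    dist y x + dist z w ≤ max (dist y z + dist x w) (dist y w + dist x z) := by
  have c1 : dist y x = dist x y := dist_comm _ _
  have c2 : dist y z = dist z y := dist_comm _ _
  have c3 : dist y w = dist w y := dist_comm _ _
  rcases le_max_iff.mp h with h' | h'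
  · exact le_max_iff.mpr (Or.inr (by linarith))
  · exact le_max_iff.mpr (Or.inl (by linarith))

lemma q_swap2 {x y z w : P}
    (h : dist x y + dist z w ≤ max (dist x z + dist y w) (dist x w + dist y z)) :
    dist x y + dist w z ≤ max (dist x w + dist y z) (dist x z + dist y w) := by
  rw [dist_comm w z, max_comm]
  exact h

lemma q_swap3 {x y z w : P}
    (h : dist x y + dist z w ≤ max (dist x z + dist y w) (dist x w + dist y z)) :
    dist z w + dist x y ≤ max (dist z x + dist w y) (dist z y + dist w x) := by
  have c1 : dist z x = dist x z := dist_comm _ _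
  have c2 : dist w y = dist y w := dist_comm _ _
  have c3 : dist z y = dist y z := dist_comm _ _
  have c4 : dist w x = dist x w := dist_comm _ _
  rcases le_max_iff.mp h with h' | h'
  · exact le_max_iff.mpr (Or.inl (by linarith))
  · exact le_max_iff.mpr (Or.inr (by linarith))

lemma concat_geo {γ₁ γ₂ : ℝ → P} {L₁ L₂ : ℝ} (δ : ℝ → P)
    (hδ : ∀ t, δ t = if t < L₁ then γ₁ t else γ₂ (t - L₁))
    (h1 : 0 ≤ L₁) (h2 : 0 ≤ L₂)
    (hγ₁ : ∀ u ∈ Icc (0:ℝ) L₁, ∀ v ∈ Icc (0:ℝ) L₁, dist (γ₁ u) (γ₁ v) = |u - v|)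
    (hγ₂ : ∀ u ∈ Icc (0:ℝ) L₂, ∀ v ∈ Icc (0:ℝ) L₂, dist (γ₂ u) (γ₂ v) = |u - v|)
    (hmix : ∀ u ∈ Icc (0:ℝ) L₁, ∀ v ∈ Icc (0:ℝ) L₂, dist (γ₁ u) (γ₂ v) = (L₁ - u) + v) :
    (∀ u ∈ Icc (0:ℝ) (L₁+L₂), ∀ v ∈ Icc (0:ℝ) (L₁+L₂), dist (δ u) (δ v) = |u - v|) ∧
    δ 0 = γ₁ 0 ∧ δ (L₁+L₂) = γ₂ L₂ := by
  have hval1 : ∀ t, t < L₁ → δ t = γ₁ t := fun t ht => by rw [hδ t]; exact if_pos ht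
  have hval2 : ∀ t, ¬ (t < L₁) → δ t = γ₂ (t - L₁) := fun t ht => by rw [hδ t]; exact if_neg ht
  have key : ∀ u ∈ Icc (0:ℝ) (L₁+L₂), ∀ v ∈ Icc (0:ℝ) (L₁+L₂), u ≤ v →
      dist (δ u) (δ v) = v - u := by
    intro u hu v hv huv
    by_cases hu1 : u < L₁
    · by_cases hv1 : v < L₁
      · rw [hval1 u hu1, hval1 v hv1,
          hγ₁ u ⟨hu.1, le_of_lt hu1⟩ v ⟨hv.1, le_of_lt hv1⟩, abs_of_nonpos (by linarith)]
        ring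
      · push_neg at hv1
        rw [hval1 u hu1, hval2 v (not_lt.mpr hv1),
          hmix u ⟨hu.1, le_of_lt hu1⟩ (v - L₁) ⟨by linarith, by linarith [hv.2]⟩]
        ring
    · have hv1 : ¬ (v < L₁) := fun hc => hu1 (lt_of_le_of_lt huv hc)
      push_neg at hu1 hv1
      rw [hval2 u (not_lt.mpr hu1), hval2 v (not_lt.mpr hv1),
        hγ₂ (u - L₁) ⟨by linarith, by linarith [hu.2]⟩ (v - L₁) ⟨by linarith, by linarith [hv.2]⟩,
        abs_of_nonpos (by linarith)]
      ring
  refine ⟨?_, ?_, ?_⟩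
  · intro u hu v hv
    rcases le_total u v with h | h
    · rw [key u hu v hv h, abs_of_nonpos (by linarith)]; ring
    · rw [dist_comm, key v hv u hu h, abs_of_nonneg (by linarith)]
  · by_cases h : (0:ℝ) < L₁
    · exact hval1 0 h
    · have hL10 : L₁ = 0 := le_antisymm (not_lt.mp h) h1
      rw [hval2 0 h]
      have e := hmix 0 ⟨le_refl _, h1⟩ 0 ⟨le_refl _, h2⟩
      rw [hL10] at e ⊢
      have : dist (γ₁ 0) (γ₂ (0 - 0)) = 0 := by
        rw [show (0:ℝ) - 0 = 0 by ring] at e ⊢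
        rw [e]; ring
      exact (dist_eq_zero.mp this).symm
  · have h : ¬ (L₁ + L₂ < L₁) := by linarith
    rw [hval2 _ h]
    congr 1
    ring

lemma reverse_geo {γ : ℝ → P} {L : ℝ}
    (hiso : ∀ u ∈ Icc (0:ℝ) L, ∀ v ∈ Icc (0:ℝ) L, dist (γ u) (γ v) = |u - v|) :
    ∀ u ∈ Icc (0:ℝ) L, ∀ v ∈ Icc (0:ℝ) L, dist (γ (L - u)) (γ (L - v)) = |u - v| := by
  intro u hu v hv
  rw [hiso (L-u) ⟨by linarith [hu.2], by linarith [hu.1]⟩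
      (L-v) ⟨by linarith [hv.2], by linarith [hv.1]⟩, abs_sub_comm]
  congr 1
  ring

end AmalgamHelpers

section Amalgam

open Classical in
noncomputable def jmap {X Y : Type*} (B : Set Y) (φ : Y → X) (w : Y) : X ⊕ {z : Y // z ∉ B} :=
  if h : w ∈ B then Sum.inl (φ w) else Sum.inr ⟨w, h⟩

noncomputable def amDist {X Y : Type*} [MetricSpace X] [MetricSpace Y]
    (B : Set Y) (π : Y → Y) (φ : Y → X) :
    (X ⊕ {z : Y // z ∉ B}) → (X ⊕ {z : Y // z ∉ B}) → ℝ
  | Sum.inl a, Sum.inl b => dist a b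
  | Sum.inl a, Sum.inr z => dist z.1 (π z.1) + dist (φ (π z.1)) a
  | Sum.inr z, Sum.inl a => dist z.1 (π z.1) + dist (φ (π z.1)) a
  | Sum.inr z, Sum.inr w => dist z.1 w.1

end Amalgam
section AmalgamMain

variable {X Y : Type*} [MetricSpace X] [MetricSpace Y]

lemma am_exists
    (hgX : Geo X) (h4X : FourPt X) (hgY : Geo Y) (h4Y : FourPt Y)
    (B : Set Y) (A : Set X) (φ : Y → X) (ψ : X → Y) (π : Y → Y) (π' : X → X)
    (hπB : ∀ z, π z ∈ B)
    (hπ : ∀ z, ∀ p ∈ B, dist z p = dist z (π z) + dist (π z) p)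
    (hπ'A : ∀ a, π' a ∈ A)
    (hπ' : ∀ a, ∀ p ∈ A, dist a p = dist a (π' a) + dist (π' a) p)
    (hφA : ∀ w ∈ B, φ w ∈ A)
    (hφiso : ∀ w ∈ B, ∀ w' ∈ B, dist (φ w) (φ w') = dist w w')
    (hψB : ∀ a, ψ a ∈ B)
    (hφψ : ∀ a, φ (ψ a) = π' a)
    (hdichX : ∀ a a', π' a = π' a' ∨
      dist a a' = dist a (π' a) + dist (π' a) (π' a') + dist (π' a') a') :
    ∃ mN : MetricSpace (X ⊕ {z : Y // z ∉ B}),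
      @IsRTree _ mN ∧
      (∀ a a' : X, @dist _ mN.toDist (Sum.inl a) (Sum.inl a') = dist a a') ∧
      (∀ w w' : Y, @dist _ mN.toDist (jmap B φ w) (jmap B φ w') = dist w w') := by
  classical
  have hπfix : ∀ p ∈ B, π p = p := proj_fixed hπ
  -- metric axioms
  have dself : ∀ p, amDist B π φ p p = 0 := by
    intro p
    rcases p with a | z <;> simp [amDist]
  have dsymm : ∀ p q, amDist B π φ p q = amDist B π φ q p := by
    intro p q
    rcases p with a | z <;> rcases q with a' | z' <;> simp [amDist, dist_comm]
  have dtri : ∀ p q r, amDist B π φ p r ≤ amDist B π φ p q + amDist B π φ q r := by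
    intro p q r
    rcases p with a1 | z1 <;> rcases q with a2 | z2 <;> rcases r with a3 | z3 <;>
      simp only [amDist]
    · exact dist_triangle _ _ _
    · -- a1 a2 z3
      have t := dist_triangle (φ (π z3.1)) a2 a1
      have c : dist a2 a1 = dist a1 a2 := dist_comm _ _
      linarith
    · -- a1 z2 a3
      have t := dist_triangle a1 (φ (π z2.1)) a3
      have c : dist a1 (φ (π z2.1)) = dist (φ (π z2.1)) a1 := dist_comm _ _
      linarith [dist_nonneg (x := z2.1) (y := π z2.1)]
    · -- a1 z2 z3
      have t1 : dist (φ (π z3.1)) a1 ≤ dist (φ (π z3.1)) (φ (π z2.1)) + dist (φ (π z2.1)) a1 :=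
        dist_triangle _ _ _
      have e1 : dist (φ (π z3.1)) (φ (π z2.1)) = dist (π z3.1) (π z2.1) :=
        hφiso _ (hπB _) _ (hπB _)
      have e2 : dist z3.1 (π z2.1) = dist z3.1 (π z3.1) + dist (π z3.1) (π z2.1) :=
        hπ z3.1 (π z2.1) (hπB _)
      have t2 : dist z3.1 (π z2.1) ≤ dist z3.1 z2.1 + dist z2.1 (π z2.1) := dist_triangle _ _ _
      have c : dist z3.1 z2.1 = dist z2.1 z3.1 := dist_comm _ _
      linarith
    · -- z1 a2 a3
      have t := dist_triangle (φ (π z1.1)) a2 a3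
      linarith
    · -- z1 a2 z3
      have t1 : dist z1.1 z3.1 ≤ dist z1.1 (π z1.1) + dist (π z1.1) (π z3.1) + dist (π z3.1) z3.1 := by
        have := dist_triangle z1.1 (π z1.1) z3.1
        have := dist_triangle (π z1.1) (π z3.1) z3.1
        linarith
      have e1 : dist (π z1.1) (π z3.1) = dist (φ (π z1.1)) (φ (π z3.1)) :=
        (hφiso _ (hπB _) _ (hπB _)).symm
      have t2 : dist (φ (π z1.1)) (φ (π z3.1)) ≤ dist (φ (π z1.1)) a2 + dist a2 (φ (π z3.1)) :=
        dist_triangle _ _ _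
      have c1 : dist a2 (φ (π z3.1)) = dist (φ (π z3.1)) a2 := dist_comm _ _
      have c2 : dist (π z3.1) z3.1 = dist z3.1 (π z3.1) := dist_comm _ _
      linarith
    · -- z1 z2 a3
      have t1 : dist (φ (π z1.1)) a3 ≤ dist (φ (π z1.1)) (φ (π z2.1)) + dist (φ (π z2.1)) a3 :=
        dist_triangle _ _ _
      have e1 : dist (φ (π z1.1)) (φ (π z2.1)) = dist (π z1.1) (π z2.1) :=
        hφiso _ (hπB _) _ (hπB _)
      have e2 : dist z1.1 (π z2.1) = dist z1.1 (π z1.1) + dist (π z1.1) (π z2.1) :=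
        hπ z1.1 (π z2.1) (hπB _)
      have t2 : dist z1.1 (π z2.1) ≤ dist z1.1 z2.1 + dist z2.1 (π z2.1) := dist_triangle _ _ _
      linarith
    · exact dist_triangle _ _ _
  have dzero : ∀ p q, amDist B π φ p q = 0 → p = q := by
    intro p q
    rcases p with a | z <;> rcases q with a' | z' <;> simp only [amDist] <;> intro h
    · rw [dist_eq_zero.mp h]
    · exfalso
      have h1 : 0 < dist z'.1 (π z'.1) := by
        rw [dist_pos]
        intro he
        exact z'.2 (he ▸ hπB z'.1)
      linarith [dist_nonneg (x := φ (π z'.1)) (y := a)]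
    · exfalso
      have h1 : 0 < dist z.1 (π z.1) := by
        rw [dist_pos]
        intro he
        exact z.2 (he ▸ hπB z.1)
      linarith [dist_nonneg (x := φ (π z.1)) (y := a')]
    · exact congrArg Sum.inr (Subtype.ext (dist_eq_zero.mp h))
  letI mN : MetricSpace (X ⊕ {z : Y // z ∉ B}) :=
    { dist := amDist B π φ
      dist_self := dself
      dist_comm := dsymm
      dist_triangle := dtri
      eq_of_dist_eq_zero := fun {p q} h => dzero p q h
      edist_dist := fun p q => rfl }
  -- unfolding lemmas
  have dll : ∀ (a a' : X), dist (Sum.inl a : (X ⊕ {z : Y // z ∉ B})) (Sum.inl a') = dist a a' := fun _ _ => rfl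
  have dlr : ∀ (a : X) (z : {z : Y // z ∉ B}),
      dist (Sum.inl a : (X ⊕ {z : Y // z ∉ B})) (Sum.inr z) = dist z.1 (π z.1) + dist (φ (π z.1)) a := fun _ _ => rfl
  have drr : ∀ (z z' : {z : Y // z ∉ B}),
      dist (Sum.inr z : (X ⊕ {z : Y // z ∉ B})) (Sum.inr z') = dist z.1 z'.1 := fun _ _ => rfl
  have drl : ∀ (z : {z : Y // z ∉ B}) (a : X),
      dist (Sum.inr z : (X ⊕ {z : Y // z ∉ B})) (Sum.inl a) = dist z.1 (π z.1) + dist (φ (π z.1)) a := fun _ _ => rfl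
  have dsymm' : ∀ p q : (X ⊕ {z : Y // z ∉ B}), dist p q = dist q p := fun p q => dist_comm p q
  have hjin : ∀ (w : Y) (h : w ∈ B), jmap B φ w = (Sum.inl (φ w) : (X ⊕ {z : Y // z ∉ B})) := fun w h => dif_pos h
  have hjout : ∀ (w : Y) (h : w ∉ B), jmap B φ w = (Sum.inr ⟨w, h⟩ : (X ⊕ {z : Y // z ∉ B})) := fun w h => dif_neg h
  have cross : ∀ (x : X) (w : Y),
      dist (Sum.inl x : (X ⊕ {z : Y // z ∉ B})) (jmap B φ w) = dist w (π w) + dist (φ (π w)) x := by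
    intro x w
    by_cases h : w ∈ B
    · rw [hjin w h, dll, hπfix w h, dist_self, dist_comm x (φ w)]
      ring
    · rw [hjout w h, dlr]
  have jiso : ∀ w w', dist (jmap B φ w : (X ⊕ {z : Y // z ∉ B})) (jmap B φ w') = dist w w' := by
    have mixed : ∀ w w', w ∈ B → w' ∉ B →
        dist (jmap B φ w : (X ⊕ {z : Y // z ∉ B})) (jmap B φ w') = dist w w' := by
      intro w w' h h'
      rw [hjin w h, hjout w' h', dlr]
      have e1 : dist (φ (π w')) (φ w) = dist (π w') w := hφiso _ (hπB w') _ h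
      have e2 : dist w' w = dist w' (π w') + dist (π w') w := hπ w' w h
      have c : dist w' w = dist w w' := dist_comm _ _
      simp only []
      linarith
    intro w w'
    by_cases h : w ∈ B <;> by_cases h' : w' ∈ B
    · rw [hjin w h, hjin w' h', dll]
      exact hφiso _ h _ h'
    · exact mixed w w' h h'
    · rw [dsymm' (jmap B φ w) (jmap B φ w'), mixed w' w h' h, dist_comm]
    · rw [hjout w h, hjout w' h', drr]
  have crossY : ∀ (x : X) (w : Y),
      dist (Sum.inl x : (X ⊕ {z : Y // z ∉ B})) (jmap B φ w) = dist w (ψ x) + dist x (π' x) := by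
    intro x w
    rw [cross]
    have h1 : dist (φ (π w)) x = dist x (φ (π w)) := dist_comm _ _
    have h2 : dist x (φ (π w)) = dist x (π' x) + dist (π' x) (φ (π w)) :=
      hπ' x _ (hφA _ (hπB w))
    have h3 : dist (π' x) (φ (π w)) = dist (ψ x) (π w) := by
      rw [← hφψ x]
      exact hφiso _ (hψB x) _ (hπB w)
    have h4 : dist w (ψ x) = dist w (π w) + dist (π w) (ψ x) := hπ w _ (hψB x)
    have c : dist (π w) (ψ x) = dist (ψ x) (π w) := dist_comm _ _
    linarith
  -- projections of points along the fiber geodesic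
  have hsegproj : ∀ (w : Y) (σ : ℝ → Y),
      (∀ u ∈ Icc (0:ℝ) (dist (π w) w), ∀ v ∈ Icc (0:ℝ) (dist (π w) w),
        dist (σ u) (σ v) = |u - v|) →
      σ 0 = π w → σ (dist (π w) w) = w →
      ∀ t ∈ Icc (0:ℝ) (dist (π w) w), π (σ t) = π w ∧ dist (σ t) (π (σ t)) = t := by
    intro w σ hiso h0 hLL t ht
    set L' := dist (π w) w with hL'
    have hL'0 : 0 ≤ L' := dist_nonneg
    have h0I : (0:ℝ) ∈ Icc (0:ℝ) L' := ⟨le_refl _, hL'0⟩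
    have hLI : L' ∈ Icc (0:ℝ) L' := ⟨hL'0, le_refl _⟩
    have hd0 : dist (σ t) (π w) = t := by
      have := hiso t ht 0 h0I
      rw [h0, abs_of_nonneg (by linarith [ht.1])] at this
      simpa using this
    have hdL : dist w (σ t) = L' - t := by
      have := hiso L' hLI t ht
      rw [hLL, abs_of_nonneg (by linarith [ht.2])] at this
      linarith [this]
    have hid : ∀ p ∈ B, dist (σ t) p = dist (σ t) (π w) + dist (π w) p := by
      intro p hp
      have hle : dist (σ t) p ≤ t + dist (π w) p := by
        calc dist (σ t) p ≤ dist (σ t) (π w) + dist (π w) p := dist_triangle _ _ _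
        _ = t + dist (π w) p := by rw [hd0]
      have hge : t + dist (π w) p ≤ dist (σ t) p := by
        have h1 : dist w p = dist w (π w) + dist (π w) p := hπ w p hp
        have h2 : dist w p ≤ dist w (σ t) + dist (σ t) p := dist_triangle _ _ _
        have c : dist w (π w) = dist (π w) w := dist_comm _ _
        linarith [hdL]
      rw [hd0]
      linarith
    have hππ : π (σ t) = π w := proj_unique hπB hπ (hπB w) hid
    refine ⟨hππ, ?_⟩
    rw [hππ, hd0]
  -- four-point helpers
  have hQ3L : ∀ (a b c : X) (w : Y),
      dist (Sum.inl a : (X ⊕ {z : Y // z ∉ B})) (Sum.inl b) + dist (Sum.inl c : (X ⊕ {z : Y // z ∉ B})) (jmap B φ w) ≤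
      max (dist (Sum.inl a : (X ⊕ {z : Y // z ∉ B})) (Sum.inl c) + dist (Sum.inl b : (X ⊕ {z : Y // z ∉ B})) (jmap B φ w))
          (dist (Sum.inl a : (X ⊕ {z : Y // z ∉ B})) (jmap B φ w) + dist (Sum.inl b : (X ⊕ {z : Y // z ∉ B})) (Sum.inl c)) := by
    intro a b c w
    rw [cross, cross, cross, dll, dll, dll]
    have c1 : dist (φ (π w)) c = dist c (φ (π w)) := dist_comm _ _
    have c2 : dist (φ (π w)) b = dist b (φ (π w)) := dist_comm _ _
    have c3 : dist (φ (π w)) a = dist a (φ (π w)) := dist_comm _ _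
    rcases le_max_iff.mp (h4X a b c (φ (π w))) with h' | h'
    · exact le_max_iff.mpr (Or.inl (by linarith))
    · exact le_max_iff.mpr (Or.inr (by linarith))
  have hQ3R : ∀ (z₁ z₂ z₃ : Y) (x : X),
      dist (jmap B φ z₁ : (X ⊕ {z : Y // z ∉ B})) (jmap B φ z₂) + dist (jmap B φ z₃ : (X ⊕ {z : Y // z ∉ B})) (Sum.inl x) ≤
      max (dist (jmap B φ z₁ : (X ⊕ {z : Y // z ∉ B})) (jmap B φ z₃) + dist (jmap B φ z₂ : (X ⊕ {z : Y // z ∉ B})) (Sum.inl x))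
          (dist (jmap B φ z₁ : (X ⊕ {z : Y // z ∉ B})) (Sum.inl x) + dist (jmap B φ z₂ : (X ⊕ {z : Y // z ∉ B})) (jmap B φ z₃)) := by
    intro z₁ z₂ z₃ x
    have e1 : dist (jmap B φ z₃ : (X ⊕ {z : Y // z ∉ B})) (Sum.inl x) = dist z₃ (ψ x) + dist x (π' x) := by
      rw [dsymm']
      exact crossY x z₃
    have e2 : dist (jmap B φ z₂ : (X ⊕ {z : Y // z ∉ B})) (Sum.inl x) = dist z₂ (ψ x) + dist x (π' x) := by
      rw [dsymm']
      exact crossY x z₂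
    have e3 : dist (jmap B φ z₁ : (X ⊕ {z : Y // z ∉ B})) (Sum.inl x) = dist z₁ (ψ x) + dist x (π' x) := by
      rw [dsymm']
      exact crossY x z₁
    rw [e1, e2, e3, jiso, jiso, jiso]
    rcases le_max_iff.mp (h4Y z₁ z₂ z₃ (ψ x)) with h' | h'
    · exact le_max_iff.mpr (Or.inl (by linarith))
    · exact le_max_iff.mpr (Or.inr (by linarith))
  have hQ2a : ∀ (a₁ a₂ : X) (z₁ z₂ : Y),
      dist (Sum.inl a₁ : (X ⊕ {z : Y // z ∉ B})) (Sum.inl a₂) + dist (jmap B φ z₁ : (X ⊕ {z : Y // z ∉ B})) (jmap B φ z₂) ≤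
      max (dist (Sum.inl a₁ : (X ⊕ {z : Y // z ∉ B})) (jmap B φ z₁) + dist (Sum.inl a₂ : (X ⊕ {z : Y // z ∉ B})) (jmap B φ z₂))
          (dist (Sum.inl a₁ : (X ⊕ {z : Y // z ∉ B})) (jmap B φ z₂) + dist (Sum.inl a₂ : (X ⊕ {z : Y // z ∉ B})) (jmap B φ z₁)) := by
    intro a₁ a₂ z₁ z₂
    rw [dll, jiso, cross, cross, cross, cross]
    have hzz : dist z₁ z₂ ≤ dist z₁ (π z₁) + dist (π z₁) (π z₂) + dist (π z₂) z₂ := by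
      have := dist_triangle z₁ (π z₁) z₂
      have := dist_triangle (π z₁) (π z₂) z₂
      linarith
    have e1 : dist (π z₁) (π z₂) = dist (φ (π z₁)) (φ (π z₂)) :=
      (hφiso _ (hπB _) _ (hπB _)).symm
    have c0 : dist (π z₂) z₂ = dist z₂ (π z₂) := dist_comm _ _
    have c1 : dist (φ (π z₁)) a₁ = dist a₁ (φ (π z₁)) := dist_comm _ _
    have c2 : dist (φ (π z₂)) a₂ = dist a₂ (φ (π z₂)) := dist_comm _ _
    have c3 : dist (φ (π z₂)) a₁ = dist a₁ (φ (π z₂)) := dist_comm _ _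
    have c4 : dist (φ (π z₁)) a₂ = dist a₂ (φ (π z₁)) := dist_comm _ _
    rcases le_max_iff.mp (h4X a₁ a₂ (φ (π z₁)) (φ (π z₂))) with h' | h'
    · exact le_max_iff.mpr (Or.inl (by linarith))
    · exact le_max_iff.mpr (Or.inr (by linarith))
  have hQ2b : ∀ (a₁ a₂ : X) (z₁ z₂ : Y),
      dist (Sum.inl a₁ : (X ⊕ {z : Y // z ∉ B})) (jmap B φ z₁) + dist (Sum.inl a₂ : (X ⊕ {z : Y // z ∉ B})) (jmap B φ z₂) ≤
      max (dist (Sum.inl a₁ : (X ⊕ {z : Y // z ∉ B})) (Sum.inl a₂) + dist (jmap B φ z₁ : (X ⊕ {z : Y // z ∉ B})) (jmap B φ z₂))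
          (dist (Sum.inl a₁ : (X ⊕ {z : Y // z ∉ B})) (jmap B φ z₂) + dist (jmap B φ z₁ : (X ⊕ {z : Y // z ∉ B})) (Sum.inl a₂)) := by
    intro a₁ a₂ z₁ z₂
    have e21 : dist (jmap B φ z₁ : (X ⊕ {z : Y // z ∉ B})) (Sum.inl a₂) = dist z₁ (ψ a₂) + dist a₂ (π' a₂) := by
      rw [dsymm']
      exact crossY a₂ z₁
    rw [dll, jiso, crossY, crossY, crossY, e21]
    have hψψ : dist (ψ a₁) (ψ a₂) = dist (π' a₁) (π' a₂) := by
      rw [← hφψ a₁, ← hφψ a₂]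
      exact (hφiso _ (hψB _) _ (hψB _)).symm
    have c1 : dist (ψ a₁) z₁ = dist z₁ (ψ a₁) := dist_comm _ _
    have c2 : dist (ψ a₂) z₂ = dist z₂ (ψ a₂) := dist_comm _ _
    have c3 : dist (ψ a₁) z₂ = dist z₂ (ψ a₁) := dist_comm _ _
    have c4 : dist (ψ a₂) z₁ = dist z₁ (ψ a₂) := dist_comm _ _
    rcases le_max_iff.mp (h4Y (ψ a₁) z₁ (ψ a₂) z₂) with h' | h'
    · rcases hdichX a₁ a₂ with hd | hd
      · have he : ψ a₂ = ψ a₁ := by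
          have : dist (ψ a₁) (ψ a₂) = 0 := by
            rw [hψψ, hd, dist_self]
          exact (dist_eq_zero.mp this).symm
        rw [he]
        exact le_max_iff.mpr (Or.inr (by linarith))
      · have e2 : dist (π' a₂) a₂ = dist a₂ (π' a₂) := dist_comm _ _
        exact le_max_iff.mpr (Or.inl (by linarith))
    · exact le_max_iff.mpr (Or.inr (by linarith))
  have hsurj : ∀ n : (X ⊕ {z : Y // z ∉ B}), (∃ a : X, n = Sum.inl a) ∨ (∃ w : Y, n = jmap B φ w) := by
    intro n
    rcases n with a | z
    · exact Or.inl ⟨a, rfl⟩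
    · exact Or.inr ⟨z.1, (hjout z.1 z.2).symm⟩
  have h4N : FourPt (X ⊕ {z : Y // z ∉ B}) := by
    intro p q r s
    rcases hsurj p with ⟨a1, rfl⟩ | ⟨w1, rfl⟩ <;>
      rcases hsurj q with ⟨a2, rfl⟩ | ⟨w2, rfl⟩ <;>
      rcases hsurj r with ⟨a3, rfl⟩ | ⟨w3, rfl⟩ <;>
      rcases hsurj s with ⟨a4, rfl⟩ | ⟨w4, rfl⟩
    · rw [dll, dll, dll, dll, dll, dll]
      exact h4X a1 a2 a3 a4
    · exact hQ3L a1 a2 a3 w4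
    · exact q_swap2 (hQ3L a1 a2 a4 w3)
    · exact hQ2a a1 a2 w3 w4
    · exact q_swap3 (hQ3L a3 a4 a1 w2)
    · exact hQ2b a1 a3 w2 w4
    · exact q_swap2 (hQ2b a1 a4 w2 w3)
    · exact q_swap1 (q_swap3 (hQ3R w3 w4 w2 a1))
    · exact q_swap1 (q_swap3 (hQ3L a3 a4 a2 w1))
    · exact q_swap1 (hQ2b a2 a3 w1 w4)
    · exact q_swap1 (q_swap2 (hQ2b a2 a4 w1 w3))
    · exact q_swap3 (hQ3R w3 w4 w1 a2)
    · exact q_swap3 (hQ2a a3 a4 w1 w2)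
    · exact q_swap2 (hQ3R w1 w2 w4 a3)
    · exact hQ3R w1 w2 w3 a4
    · rw [jiso, jiso, jiso, jiso, jiso, jiso]
      exact h4Y w1 w2 w3 w4
  -- geodesics in (X ⊕ {z : Y // z ∉ B})
  have geoLR : ∀ (a : X) (z : {z : Y // z ∉ B}), ∃ γ : ℝ → (X ⊕ {z : Y // z ∉ B}),
      (∀ u ∈ Icc (0:ℝ) (dist (Sum.inl a : (X ⊕ {z : Y // z ∉ B})) (Sum.inr z)),
       ∀ v ∈ Icc (0:ℝ) (dist (Sum.inl a : (X ⊕ {z : Y // z ∉ B})) (Sum.inr z)), dist (γ u) (γ v) = |u - v|) ∧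
      γ 0 = Sum.inl a ∧ γ (dist (Sum.inl a : (X ⊕ {z : Y // z ∉ B})) (Sum.inr z)) = Sum.inr z := by
    intro a z
    obtain ⟨γ₁, hiso₁, h10, h1L⟩ := hgX a (φ (π z.1))
    obtain ⟨σ, hisoσ, hσ0, hσL⟩ := hgY (π z.1) z.1
    set L₁ := dist a (φ (π z.1)) with hL₁def
    set h := dist (π z.1) z.1 with hhdef
    have hL₁0 : 0 ≤ L₁ := dist_nonneg
    have hh0 : 0 ≤ h := dist_nonneg
    have hproj := hsegproj z.1 σ hisoσ hσ0 hσL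
    have hiso₁' : ∀ u ∈ Icc (0:ℝ) L₁, ∀ v ∈ Icc (0:ℝ) L₁,
        dist ((fun t => (Sum.inl (γ₁ t) : (X ⊕ {z : Y // z ∉ B}))) u) ((fun t => (Sum.inl (γ₁ t) : (X ⊕ {z : Y // z ∉ B}))) v) = |u - v| := by
      intro u hu v hv
      show dist (Sum.inl (γ₁ u) : (X ⊕ {z : Y // z ∉ B})) (Sum.inl (γ₁ v)) = |u - v|
      rw [dll]
      exact hiso₁ u hu v hv
    have hiso₂' : ∀ u ∈ Icc (0:ℝ) h, ∀ v ∈ Icc (0:ℝ) h,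
        dist ((fun t => jmap B φ (σ t) : ℝ → (X ⊕ {z : Y // z ∉ B})) u) ((fun t => jmap B φ (σ t) : ℝ → (X ⊕ {z : Y // z ∉ B})) v) = |u - v| := by
      intro u hu v hv
      show dist (jmap B φ (σ u) : (X ⊕ {z : Y // z ∉ B})) (jmap B φ (σ v)) = |u - v|
      rw [jiso]
      exact hisoσ u hu v hv
    have hmix : ∀ u ∈ Icc (0:ℝ) L₁, ∀ v ∈ Icc (0:ℝ) h,
        dist ((fun t => (Sum.inl (γ₁ t) : (X ⊕ {z : Y // z ∉ B}))) u) ((fun t => jmap B φ (σ t) : ℝ → (X ⊕ {z : Y // z ∉ B})) v)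
          = (L₁ - u) + v := by
      intro u hu v hv
      have hp := hproj v hv
      have hp2 : dist (σ v) (π z.1) = v := by
        rw [← hp.1]
        exact hp.2
      show dist (Sum.inl (γ₁ u) : (X ⊕ {z : Y // z ∉ B})) (jmap B φ (σ v)) = (L₁ - u) + v
      rw [cross (γ₁ u) (σ v), hp.1]
      have e1 : dist (φ (π z.1)) (γ₁ u) = L₁ - u := by
        have hLI : L₁ ∈ Icc (0:ℝ) L₁ := ⟨hL₁0, le_refl _⟩
        have h5 := hiso₁ u hu L₁ hLI
        rw [h1L] at h5
        rw [dist_comm, h5, abs_of_nonpos (by linarith [hu.2])]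
        ring
      rw [hp2, e1]
      ring
    obtain ⟨hccA, hccB, hccC⟩ := concat_geo
      (fun t => if t < L₁ then (Sum.inl (γ₁ t) : (X ⊕ {z : Y // z ∉ B})) else jmap B φ (σ (t - L₁)))
      (fun t => rfl) hL₁0 hh0 hiso₁' hiso₂' hmix
    have hdeq : dist (Sum.inl a : (X ⊕ {z : Y // z ∉ B})) (Sum.inr z) = L₁ + h := by
      rw [dlr]
      have c1 : dist z.1 (π z.1) = dist (π z.1) z.1 := dist_comm _ _
      have c2 : dist (φ (π z.1)) a = dist a (φ (π z.1)) := dist_comm _ _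
      linarith
    refine ⟨fun t => if t < L₁ then (Sum.inl (γ₁ t) : (X ⊕ {z : Y // z ∉ B})) else jmap B φ (σ (t - L₁)), ?_, ?_, ?_⟩
    · rw [hdeq]
      exact hccA
    · have hb : (fun t => if t < L₁ then (Sum.inl (γ₁ t) : (X ⊕ {z : Y // z ∉ B})) else jmap B φ (σ (t - L₁))) 0
          = Sum.inl (γ₁ 0) := hccB
      rw [hb, h10]
    · rw [hdeq]
      have hb : (fun t => if t < L₁ then (Sum.inl (γ₁ t) : (X ⊕ {z : Y // z ∉ B})) else jmap B φ (σ (t - L₁))) (L₁ + h)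
          = jmap B φ (σ h) := hccC
      rw [hb, hσL, hjout z.1 z.2]
  have hgN : Geo (X ⊕ {z : Y // z ∉ B}) := by
    intro n₁ n₂
    rcases n₁ with a | z
    · rcases n₂ with a' | z
      · obtain ⟨γ, hiso, h0, hL⟩ := hgX a a'
        refine ⟨fun t => (Sum.inl (γ t) : (X ⊕ {z : Y // z ∉ B})), ?_, ?_, ?_⟩
        · intro u hu v hv
          show dist (Sum.inl (γ u) : (X ⊕ {z : Y // z ∉ B})) (Sum.inl (γ v)) = |u - v|
          rw [dll]
          exact hiso u hu v hv
        · show (Sum.inl (γ 0) : (X ⊕ {z : Y // z ∉ B})) = Sum.inl a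
          rw [h0]
        · show (Sum.inl (γ (dist a a')) : (X ⊕ {z : Y // z ∉ B})) = Sum.inl a'
          rw [hL]
      · exact geoLR a z
    · rcases n₂ with a | z'
      · obtain ⟨γ, hisoγ, h0γ, hLγ⟩ := geoLR a z
        set D := dist (Sum.inl a : (X ⊕ {z : Y // z ∉ B})) (Sum.inr z) with hD
        have hD' : dist (Sum.inr z : (X ⊕ {z : Y // z ∉ B})) (Sum.inl a) = D := dsymm' _ _
        refine ⟨fun t => γ (D - t), ?_, ?_, ?_⟩
        · rw [hD']
          exact reverse_geo hisoγ
        · show γ (D - 0) = Sum.inr z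
          rw [show D - 0 = D by ring, hLγ]
        · rw [hD']
          show γ (D - D) = Sum.inl a
          rw [show D - D = 0 by ring, h0γ]
      · obtain ⟨σ, hisoσ, hσ0, hσL⟩ := hgY z.1 z'.1
        refine ⟨fun t => jmap B φ (σ t), ?_, ?_, ?_⟩
        · intro u hu v hv
          show dist (jmap B φ (σ u) : (X ⊕ {z : Y // z ∉ B})) (jmap B φ (σ v)) = |u - v|
          rw [jiso]
          exact hisoσ u hu v hv
        · show jmap B φ (σ 0) = Sum.inr z
          rw [hσ0, hjout z.1 z.2]
        · show jmap B φ (σ (dist z.1 z'.1)) = Sum.inr z'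
          rw [hσL, hjout z'.1 z'.2]
  exact ⟨mN, isRTree_of_geo_fourPt hgN h4N, dll, jiso⟩

end AmalgamMain
section Assembly

open UniformSpace

lemma completion_map_isometric {M₀ M₁ : Type*} [MetricSpace M₀] [MetricSpace M₁]
    {f : M₀ → M₁} (hf : IsIsometric f) :
    ∀ u v : Completion M₀, dist (Completion.map f u) (Completion.map f v) = dist u v := by
  have hiso : Isometry f := Isometry.of_dist_eq hf
  intro u v
  refine Completion.induction_on₂ (p := fun u v =>
      dist (Completion.map f u) (Completion.map f v) = dist u v) u v ?_ ?_
  · apply isClosed_eq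
    · exact ((Completion.continuous_map.comp continuous_fst).dist
        (Completion.continuous_map.comp continuous_snd))
    · exact continuous_fst.dist continuous_snd
  · intro a b
    rw [Completion.map_coe hiso.uniformContinuous, Completion.map_coe hiso.uniformContinuous,
      Completion.dist_eq, Completion.dist_eq, hf]

lemma main_nonempty {M₀ M₁ M₂ : Type u}
    [MetricSpace M₀] [MetricSpace M₁] [MetricSpace M₂]
    (hne : Nonempty M₀)
    (g0 : Geo M₀) (p0 : FourPt M₀) (g1 : Geo M₁) (p1 : FourPt M₁)
    (g2 : Geo M₂) (p2 : FourPt M₂)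
    (f₁ : M₀ → M₁) (f₂ : M₀ → M₂) (hf₁ : IsIsometric f₁) (hf₂ : IsIsometric f₂) :
    ∃ (N : Type u) (mN : MetricSpace N) (g₁ : M₁ → N) (g₂ : M₂ → N),
      @IsRTree N mN ∧ @IsIsometric M₁ N _ mN g₁ ∧ @IsIsometric M₂ N _ mN g₂ ∧
      g₁ ∘ f₁ = g₂ ∘ f₂ := by
  classical
  set X := Completion M₁ with hX
  set Y := Completion M₂ with hY
  set Z := Completion M₀ with hZ
  have hneZ : Nonempty Z := ⟨(↑(Classical.choice hne) : Completion M₀)⟩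
  set F : Z → X := Completion.map f₁ with hF
  set G : Z → Y := Completion.map f₂ with hG
  have hFiso : ∀ u v : Z, dist (F u) (F v) = dist u v := completion_map_isometric hf₁
  have hGiso : ∀ u v : Z, dist (G u) (G v) = dist u v := completion_map_isometric hf₂
  have hgX : Geo X := geo_completion g1 p1
  have h4X : FourPt X := fourPt_completion p1
  have hgY : Geo Y := geo_completion g2 p2
  have h4Y : FourPt Y := fourPt_completion p2
  have hgZ : Geo Z := geo_completion g0 p0
  set A : Set X := range F with hA
  set B : Set Y := range G with hB
  have hAne : A.Nonempty := ⟨F (Classical.choice hneZ), ⟨_, rfl⟩⟩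
  have hBne : B.Nonempty := ⟨G (Classical.choice hneZ), ⟨_, rfl⟩⟩
  have hAcl : IsClosed A := range_closed hFiso
  have hBcl : IsClosed B := range_closed hGiso
  have hAconv : ∀ p ∈ A, ∀ q ∈ A, ∀ m, MBtw p m q → m ∈ A := range_convex hgZ h4X hFiso
  have hBconv : ∀ p ∈ B, ∀ q ∈ B, ∀ m, MBtw p m q → m ∈ B := range_convex hgZ h4Y hGiso
  choose π hπB hπ using exists_proj_point hgY h4Y hBne hBcl hBconv
  choose π' hπ'A hπ' using exists_proj_point hgX h4X hAne hAcl hAconv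
  have hGinj : Function.Injective G := by
    intro u v h
    have := hGiso u v
    rw [h, dist_self] at this
    exact dist_eq_zero.mp this.symm
  have hFinj : Function.Injective F := by
    intro u v h
    have := hFiso u v
    rw [h, dist_self] at this
    exact dist_eq_zero.mp this.symm
  set φ : Y → X := fun w => F (Function.invFun G w) with hφ
  set ψ : X → Y := fun a => G (Function.invFun F (π' a)) with hψ
  have hφG : ∀ u : Z, φ (G u) = F u := by
    intro u
    rw [hφ]
    simp only []
    rw [Function.leftInverse_invFun hGinj u]
  have hφA : ∀ w ∈ B, φ w ∈ A := by
    rintro _ ⟨u, rfl⟩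
    rw [hφG]
    exact ⟨u, rfl⟩
  have hφiso : ∀ w ∈ B, ∀ w' ∈ B, dist (φ w) (φ w') = dist w w' := by
    rintro _ ⟨u, rfl⟩ _ ⟨v, rfl⟩
    rw [hφG, hφG, hFiso, ← hGiso]
  have hψB : ∀ a : X, ψ a ∈ B := fun a => ⟨_, rfl⟩
  have hφψ : ∀ a : X, φ (ψ a) = π' a := by
    intro a
    rw [hψ]
    simp only []
    rw [hφG]
    exact Function.invFun_eq (hπ'A a)
  have hdichX : ∀ a a', π' a = π' a' ∨
      dist a a' = dist a (π' a) + dist (π' a) (π' a') + dist (π' a') a' :=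
    proj_dichotomy hgX h4X hAconv hπ'A hπ'
  obtain ⟨mN, hTree, hdll, hjiso⟩ :=
    am_exists hgX h4X hgY h4Y B A φ ψ π π' hπB hπ hπ'A hπ' hφA hφiso hψB hφψ hdichX
  refine ⟨X ⊕ {z : Y // z ∉ B}, mN, fun m => Sum.inl (↑m : X), fun m => jmap B φ (↑m : Y),
    hTree, ?_, ?_, ?_⟩
  · intro x y
    rw [hdll]
    exact Completion.dist_eq x y
  · intro x y
    rw [hjiso]
    exact Completion.dist_eq x y
  · funext x
    have hcoe1 : (↑(f₁ x) : X) = F (↑x : Z) :=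
      (Completion.map_coe (Isometry.of_dist_eq hf₁).uniformContinuous x).symm
    have hcoe2 : (↑(f₂ x) : Y) = G (↑x : Z) :=
      (Completion.map_coe (Isometry.of_dist_eq hf₂).uniformContinuous x).symm
    show Sum.inl (↑(f₁ x) : X) = jmap B φ (↑(f₂ x) : Y)
    rw [hcoe1, hcoe2]
    have hmem : G (↑x : Z) ∈ B := ⟨_, rfl⟩
    rw [show jmap B φ (G (↑x : Z)) = Sum.inl (φ (G (↑x : Z))) from dif_pos hmem, hφG]

lemma punit_geo : Geo PUnit.{u+1} := by
  intro a b
  have hab : a = b := Subsingleton.elim a b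
  have hd : dist a b = 0 := by rw [hab, dist_self]
  rw [hd]
  refine ⟨fun _ => a, ?_, rfl, hab⟩
  intro u hu v hv
  have hu0 : u = 0 := le_antisymm hu.2 hu.1
  have hv0 : v = 0 := le_antisymm hv.2 hv.1
  rw [hu0, hv0, dist_self]
  simp

lemma punit_fourPt : FourPt PUnit.{u+1} := by
  intro x y z w
  have h : ∀ a b : PUnit.{u+1}, dist a b = 0 := fun a b => by
    rw [Subsingleton.elim a b, dist_self]
  simp [h]

end Assembly

theorem statement_6' {M₀ M₁ M₂ : Type u}
    [MetricSpace M₀] [MetricSpace M₁] [MetricSpace M₂]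
    (h₀ : IsRTree M₀) (h₁ : IsRTree M₁) (h₂ : IsRTree M₂)
    (f₁ : M₀ → M₁) (f₂ : M₀ → M₂)
    (hf₁ : IsIsometric f₁) (hf₂ : IsIsometric f₂) :
    ∃ (N : Type u) (mN : MetricSpace N) (g₁ : M₁ → N) (g₂ : M₂ → N),
      @IsRTree N mN ∧ @IsIsometric M₁ N _ mN g₁ ∧ @IsIsometric M₂ N _ mN g₂ ∧
      g₁ ∘ f₁ = g₂ ∘ f₂ := by
  by_cases hne : Nonempty M₀
  · exact main_nonempty hne (geo_of_isRTree h₀) (fourPt_of_isRTree h₀)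
      (geo_of_isRTree h₁) (fourPt_of_isRTree h₁)
      (geo_of_isRTree h₂) (fourPt_of_isRTree h₂) f₁ f₂ hf₁ hf₂
  · have hM₀ : IsEmpty M₀ := not_nonempty_iff.mp hne
    by_cases h1e : Nonempty M₁
    · by_cases h2e : Nonempty M₂
      · -- use a point
        obtain ⟨N, mN, g₁, g₂, hT, hg₁, hg₂, _⟩ :=
          main_nonempty (⟨PUnit.unit⟩ : Nonempty PUnit.{u+1}) punit_geo punit_fourPt
            (geo_of_isRTree h₁) (fourPt_of_isRTree h₁)
            (geo_of_isRTree h₂) (fourPt_of_isRTree h₂)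
            (fun _ => Classical.choice h1e) (fun _ => Classical.choice h2e)
            (fun x y => by rw [Subsingleton.elim x y, dist_self, dist_self])
            (fun x y => by rw [Subsingleton.elim x y, dist_self, dist_self])
        exact ⟨N, mN, g₁, g₂, hT, hg₁, hg₂, funext fun x => (hM₀.elim x)⟩
      · have hM₂ : IsEmpty M₂ := not_nonempty_iff.mp h2e
        exact ⟨M₁, inferInstance, id, fun m => (hM₂.elim m), h₁, fun x y => rfl,
          fun x y => (hM₂.elim x), funext fun x => (hM₀.elim x)⟩
    · have hM₁ : IsEmpty M₁ := not_nonempty_iff.mp h1e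
      exact ⟨M₂, inferInstance, fun m => (hM₁.elim m), id, h₂, fun x y => (hM₁.elim x),
        fun x y => rfl, funext fun x => (hM₀.elim x)⟩

/-- ℝ-trees can be amalgamated: given ℝ-trees `M₀, M₁, M₂` and
isometric embeddings `f₁ : M₀ → M₁`, `f₂ : M₀ → M₂`, there are an ℝ-tree `N` and
isometric embeddings `g₁ : M₁ → N`, `g₂ : M₂ → N` with `g₁ ∘ f₁ = g₂ ∘ f₂`. -/
theorem statement_6 {M₀ M₁ M₂ : Type u}
    [MetricSpace M₀] [MetricSpace M₁] [MetricSpace M₂]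
    (h₀ : IsRTree M₀) (h₁ : IsRTree M₁) (h₂ : IsRTree M₂)
    (f₁ : M₀ → M₁) (f₂ : M₀ → M₂)
    (hf₁ : IsIsometric f₁) (hf₂ : IsIsometric f₂) :
    ∃ (N : Type u) (mN : MetricSpace N) (g₁ : M₁ → N) (g₂ : M₂ → N),
      @IsRTree N mN ∧ @IsIsometric M₁ N _ mN g₁ ∧ @IsIsometric M₂ N _ mN g₂ ∧
      g₁ ∘ f₁ = g₂ ∘ f₂ := by
  exact statement_6' h₀ h₁ h₂ f₁ f₂ hf₁ hf₂
end
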